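/- arXiv:1507.08536 — 3 statements merged into one kernel-verified Lean document; each statement's English description precedes it below -/
import Mathlib

section
/- Let H be the union of finitely many axis-parallel unit squares in ℝ², i.e., H = ⋃_{i=1}^n H_i where each H_i is a translate of [0,1]² and n ≥ 1. Then the perimeter of H is at most 4 times the area of H, i.e., 𝓗¹(frontier H) ≤ 4 · vol(H). -/
open MeasureTheory Set
open scoped ENNReal

/-- The closed axis-parallel unit square `[0,1]²` in `ℝ²`. -/
def unitSquare : Set (EuclideanSpace ℝ (Fin 2)) :=
  {x | ∀ i, x i ∈ Set.Icc (0 : ℝ) 1}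

namespace PerimeterAux

/-- Counting lemma: any finite set of "one-sided boundary" points of a set `K ⊆ ℝ`
which locally contains unit intervals has cardinality at most `2 * volume K`. -/
lemma card_le_two_mul_volume (K : Set ℝ) (F : Finset ℝ)
    (hF : ∀ b ∈ F, (Set.Ico b (b+1) ⊆ K ∧ ∃ δ > 0, Set.Ioo (b-δ) b ∩ K = ∅) ∨
                   (Set.Ioc (b-1) b ⊆ K ∧ ∃ δ > 0, Set.Ioo b (b+δ) ∩ K = ∅)) :
    (F.card : ℝ≥0∞) ≤ 2 * volume K := by
  classical
  set P : ℝ → Prop := fun b => Set.Ico b (b+1) ⊆ K ∧ ∃ δ > 0, Set.Ioo (b-δ) b ∩ K = ∅ with hP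
  set L := F.filter P with hL
  set R := F.filter (fun b => ¬ P b) with hR
  have hLone : ∀ b1 ∈ L, ∀ b2 ∈ L, b1 < b2 → b1 + 1 ≤ b2 := by
    intro b1 h1 b2 h2 hlt
    by_contra hcon
    push_neg at hcon
    obtain ⟨hsub, δ, hδ, hemp⟩ := (Finset.mem_filter.1 h2).2
    have hsub1 := (Finset.mem_filter.1 h1).2.1
    set m := max b1 (b2 - δ) with hm
    have hmlt : m < b2 := max_lt hlt (by linarith)
    set x := (m + b2)/2 with hx
    have hx1 : m < x := by simp only [hx]; linarith
    have hx2 : x < b2 := by simp only [hx]; linarith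
    have hxK : x ∈ K := hsub1 ⟨le_of_lt (lt_of_le_of_lt (le_max_left _ _) hx1), by linarith⟩
    have : x ∈ Set.Ioo (b2 - δ) b2 ∩ K :=
      ⟨⟨lt_of_le_of_lt (le_max_right _ _) hx1, hx2⟩, hxK⟩
    rw [hemp] at this; exact this
  have hRone : ∀ b1 ∈ R, ∀ b2 ∈ R, b1 < b2 → b1 + 1 ≤ b2 := by
    intro b1 h1 b2 h2 hlt
    by_contra hcon
    push_neg at hcon
    have h1' := Finset.mem_filter.1 h1
    have h2' := Finset.mem_filter.1 h2
    obtain ⟨hsub1, δ, hδ, hemp⟩ := (hF b1 h1'.1).resolve_left h1'.2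
    have hsub2 := ((hF b2 h2'.1).resolve_left h2'.2).1
    set m := min (b1 + δ) b2 with hm
    have hmgt : b1 < m := lt_min (by linarith) hlt
    set x := (b1 + m)/2 with hx
    have hx1 : b1 < x := by simp only [hx]; linarith
    have hx2 : x < m := by simp only [hx]; linarith
    have hxK : x ∈ K := hsub2 ⟨by linarith [min_le_right (b1+δ) b2],
      le_of_lt (lt_of_lt_of_le hx2 (min_le_right _ _))⟩
    have : x ∈ Set.Ioo b1 (b1 + δ) ∩ K :=
      ⟨⟨hx1, lt_of_lt_of_le hx2 (min_le_left _ _)⟩, hxK⟩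
    rw [hemp] at this; exact this
  have volL : (L.card : ℝ≥0∞) ≤ volume K := by
    have hdisj : Set.PairwiseDisjoint (↑L : Set ℝ) (fun b => Set.Ico b (b+1)) := by
      intro b1 h1 b2 h2 hne
      rcases lt_or_gt_of_ne hne with h | h
      · apply Set.disjoint_left.2; rintro x ⟨_, hx2⟩ ⟨hx3, _⟩
        linarith [hLone b1 h1 b2 h2 h]
      · apply Set.disjoint_left.2; rintro x ⟨hx1, _⟩ ⟨_, hx4⟩
        linarith [hLone b2 h2 b1 h1 h]
    calc (L.card : ℝ≥0∞) = ∑ b ∈ L, volume (Set.Ico b (b+1)) := by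
          simp [Real.volume_Ico]
      _ = volume (⋃ b ∈ L, Set.Ico b (b+1)) :=
          (measure_biUnion_finset hdisj (fun b _ => measurableSet_Ico)).symm
      _ ≤ volume K := by
          apply measure_mono
          intro x hx
          simp only [Set.mem_iUnion] at hx
          obtain ⟨b, hb, hxb⟩ := hx
          exact (Finset.mem_filter.1 hb).2.1 hxb
  have volR : (R.card : ℝ≥0∞) ≤ volume K := by
    have hdisj : Set.PairwiseDisjoint (↑R : Set ℝ) (fun b => Set.Ioc (b-1) b) := by
      intro b1 h1 b2 h2 hne
      rcases lt_or_gt_of_ne hne with h | h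
      · apply Set.disjoint_left.2; rintro x ⟨_, hx2⟩ ⟨hx3, _⟩
        linarith [hRone b1 h1 b2 h2 h]
      · apply Set.disjoint_left.2; rintro x ⟨hx1, _⟩ ⟨_, hx4⟩
        linarith [hRone b2 h2 b1 h1 h]
    calc (R.card : ℝ≥0∞) = ∑ b ∈ R, volume (Set.Ioc (b-1) b) := by
          simp [Real.volume_Ioc]
      _ = volume (⋃ b ∈ R, Set.Ioc (b-1) b) :=
          (measure_biUnion_finset hdisj (fun b _ => measurableSet_Ioc)).symm
      _ ≤ volume K := by
          apply measure_mono
          intro x hx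
          simp only [Set.mem_iUnion] at hx
          obtain ⟨b, hb, hxb⟩ := hx
          have h' := Finset.mem_filter.1 hb
          exact ((hF b h'.1).resolve_left h'.2).1 hxb
  have hcard : L.card + R.card = F.card :=
    Finset.card_filter_add_card_filter_not (p := P)
  calc (F.card : ℝ≥0∞) = (L.card : ℝ≥0∞) + (R.card : ℝ≥0∞) := by
        rw [← hcard]; push_cast; ring
    _ ≤ volume K + volume K := add_le_add volL volR
    _ = 2 * volume K := (two_mul _).symm

/-- A non-interior point of a finite union of closed unit intervals is a
"one-sided boundary" point. -/
lemma boundary_type {ι : Type*} (s : Finset ι) (u : ι → ℝ) (K : Set ℝ)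
    (hK : K = ⋃ i ∈ s, Set.Icc (u i) (u i + 1)) {a : ℝ} (haK : a ∈ K)
    (haI : a ∉ interior K) :
    (Set.Ico a (a+1) ⊆ K ∧ ∃ δ > 0, Set.Ioo (a-δ) a ∩ K = ∅) ∨
    (Set.Ioc (a-1) a ⊆ K ∧ ∃ δ > 0, Set.Ioo a (a+δ) ∩ K = ∅) := by
  classical
  have hmemK : ∀ x, x ∈ K ↔ ∃ i ∈ s, u i ≤ x ∧ x ≤ u i + 1 := by
    intro x; rw [hK]; aesop
  by_cases hA1 : ∃ i ∈ s, u i < a ∧ a ≤ u i + 1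
  · by_cases hA2 : ∃ i ∈ s, u i ≤ a ∧ a < u i + 1
    · exfalso
      obtain ⟨i, his, hi1, hi2⟩ := hA1
      obtain ⟨j, hjs, hj1, hj2⟩ := hA2
      apply haI
      have : Set.Ioo (u i) (u j + 1) ⊆ K := by
        intro x ⟨hx1, hx2⟩
        rcases le_or_gt x a with h | h
        · exact (hmemK x).2 ⟨i, his, le_of_lt hx1, le_trans h hi2⟩
        · exact (hmemK x).2 ⟨j, hjs, le_trans hj1 (le_of_lt h), le_of_lt hx2⟩
      exact interior_maximal this isOpen_Ioo ⟨hi1, hj2⟩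
    · right
      push_neg at hA2
      obtain ⟨i0, hi0s, hi01, hi02⟩ := hA1
      have ha_eq : a = u i0 + 1 := by
        rcases eq_or_lt_of_le hi02 with h | h
        · exact h
        · exact absurd h (not_lt.2 (hA2 i0 hi0s (le_of_lt hi01)))
      constructor
      · intro x ⟨hx1, hx2⟩
        exact (hmemK x).2 ⟨i0, hi0s, by linarith, by linarith⟩
      · set g : ι → ℝ := fun i => if a < u i then u i - a else 1 with hg
        refine ⟨min 1 (s.inf' ⟨i0, hi0s⟩ g), ?_, ?_⟩
        · apply lt_min one_pos
          apply (Finset.lt_inf'_iff _).2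
          intro i his
          simp only [hg]
          split
          · linarith
          · exact one_pos
        · ext x
          simp only [Set.mem_inter_iff, Set.mem_Ioo, Set.mem_empty_iff_false, iff_false,
            not_and, and_imp]
          intro hx1 hx2 hxK
          obtain ⟨i, his, hu1, hu2⟩ := (hmemK x).1 hxK
          have := hA2 i his
          rcases lt_or_ge a (u i) with h | h
          · have h1 : s.inf' ⟨i0, hi0s⟩ g ≤ g i := Finset.inf'_le _ his
            have h2 : g i = u i - a := by simp [hg, h]
            have := min_le_right 1 (s.inf' ⟨i0, hi0s⟩ g)
            linarith
          · have : u i + 1 ≤ a := this h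
            linarith
  · left
    push_neg at hA1
    obtain ⟨i0, hi0s, hi01, hi02⟩ := (hmemK a).1 haK
    have ha_eq : a = u i0 := by
      rcases eq_or_lt_of_le hi01 with h | h
      · exact h.symm
      · exact absurd hi02 (not_le.2 (hA1 i0 hi0s h))
    constructor
    · intro x ⟨hx1, hx2⟩
      exact (hmemK x).2 ⟨i0, hi0s, by linarith, by linarith⟩
    · set g : ι → ℝ := fun i => if u i + 1 < a then a - (u i + 1) else 1 with hg
      refine ⟨min 1 (s.inf' ⟨i0, hi0s⟩ g), ?_, ?_⟩
      · apply lt_min one_pos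
        apply (Finset.lt_inf'_iff _).2
        intro i his
        simp only [hg]
        split
        · linarith
        · exact one_pos
      · ext x
        simp only [Set.mem_inter_iff, Set.mem_Ioo, Set.mem_empty_iff_false, iff_false,
          not_and, and_imp]
        intro hx1 hx2 hxK
        obtain ⟨i, his, hu1, hu2⟩ := (hmemK x).1 hxK
        rcases lt_or_ge (u i + 1) a with h | h
        · have h1 : s.inf' ⟨i0, hi0s⟩ g ≤ g i := Finset.inf'_le _ his
          have h2 : g i = a - (u i + 1) := by simp [hg, h]
          have := min_le_right 1 (s.inf' ⟨i0, hi0s⟩ g)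
          linarith
        · have : a ≤ u i := by
            by_contra hcon
            push_neg at hcon
            exact absurd h (not_le.2 (hA1 i his hcon))
          linarith

noncomputable abbrev mk2 (t y : ℝ) : EuclideanSpace ℝ (Fin 2) := !₂[t, y]

lemma eq_mk2 (x : EuclideanSpace ℝ (Fin 2)) : x = mk2 (x 0) (x 1) := by
  ext j; fin_cases j <;> rfl

lemma isometry_mk2 (a : ℝ) : Isometry (mk2 a) := by
  apply Isometry.of_dist_eq
  intro y1 y2
  rw [EuclideanSpace.dist_eq]
  simp [Fin.sum_univ_two, Real.sqrt_sq_eq_abs, Real.dist_eq]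

lemma mem_square_iff (c x : EuclideanSpace ℝ (Fin 2)) :
    x ∈ (fun y => c + y) '' unitSquare ↔ ∀ j, x j ∈ Set.Icc (c j) (c j + 1) := by
  constructor
  · rintro ⟨y, hy, rfl⟩ j
    have h := hy j
    simp only [Set.mem_Icc] at h ⊢
    have he : (c + y) j = c j + y j := rfl
    rw [he]
    constructor <;> linarith [h.1, h.2]
  · intro h
    refine ⟨x - c, fun j => ?_, by simp⟩
    have h := h j
    simp only [Set.mem_Icc] at h ⊢
    have he : (x - c) j = x j - c j := rfl
    rw [he]
    constructor <;> linarith [h.1, h.2]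

section Main

variable {n : ℕ} (c : Fin n → EuclideanSpace ℝ (Fin 2)) (H : Set (EuclideanSpace ℝ (Fin 2)))

lemma mem_H_iff (hH : H = ⋃ i, (fun x => c i + x) '' unitSquare)
    (x : EuclideanSpace ℝ (Fin 2)) :
    x ∈ H ↔ ∃ i, ∀ j, x j ∈ Set.Icc (c i j) (c i j + 1) := by
  rw [hH]
  simp only [Set.mem_iUnion]
  exact exists_congr fun i => mem_square_iff (c i) x

lemma H_closed (hH : H = ⋃ i, (fun x => c i + x) '' unitSquare) : IsClosed H := by
  rw [hH]
  apply isClosed_iUnion_of_finite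
  intro i
  have : (fun y => c i + y) '' unitSquare
      = ⋂ j, (fun x : EuclideanSpace ℝ (Fin 2) => x j) ⁻¹' Set.Icc (c i j) (c i j + 1) := by
    ext x
    simp only [mem_square_iff, Set.mem_iInter, Set.mem_preimage]
  rw [this]
  exact isClosed_iInter fun j =>
    isClosed_Icc.preimage (EuclideanSpace.proj j).continuous

/-- Classification of frontier points: some coordinate is extremal for some square. -/
lemma frontier_classify (hH : H = ⋃ i, (fun x => c i + x) '' unitSquare)
    {p : EuclideanSpace ℝ (Fin 2)} (hp : p ∈ frontier H) :
    (∃ i, p 0 = c i 0 ∨ p 0 = c i 0 + 1) ∨ (∃ i, p 1 = c i 1 ∨ p 1 = c i 1 + 1) := by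
  have hpH : p ∈ H := by
    have := hp.1
    rwa [(H_closed c H hH).closure_eq] at this
  have hpI : p ∉ interior H := hp.2
  obtain ⟨i, hi⟩ := (mem_H_iff c H hH p).1 hpH
  by_contra hcon
  push_neg at hcon
  apply hpI
  have h0 : p 0 ∈ Set.Ioo (c i 0) (c i 0 + 1) := by
    rcases (hi 0) with ⟨h1, h2⟩
    exact ⟨lt_of_le_of_ne h1 (Ne.symm (hcon.1 i).1), lt_of_le_of_ne h2 (hcon.1 i).2⟩
  have h1 : p 1 ∈ Set.Ioo (c i 1) (c i 1 + 1) := by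
    rcases (hi 1) with ⟨h1, h2⟩
    exact ⟨lt_of_le_of_ne h1 (Ne.symm (hcon.2 i).1), lt_of_le_of_ne h2 (hcon.2 i).2⟩
  have hopen : IsOpen ((fun x : EuclideanSpace ℝ (Fin 2) => x 0) ⁻¹' Set.Ioo (c i 0) (c i 0 + 1)
      ∩ (fun x : EuclideanSpace ℝ (Fin 2) => x 1) ⁻¹' Set.Ioo (c i 1) (c i 1 + 1)) :=
    (isOpen_Ioo.preimage (EuclideanSpace.proj 0).continuous).inter
      (isOpen_Ioo.preimage (EuclideanSpace.proj 1).continuous)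
  have hsub : ((fun x : EuclideanSpace ℝ (Fin 2) => x 0) ⁻¹' Set.Ioo (c i 0) (c i 0 + 1)
      ∩ (fun x : EuclideanSpace ℝ (Fin 2) => x 1) ⁻¹' Set.Ioo (c i 1) (c i 1 + 1)) ⊆ H := by
    rintro x ⟨hx0, hx1⟩
    refine (mem_H_iff c H hH x).2 ⟨i, fun j => ?_⟩
    fin_cases j
    · exact ⟨le_of_lt hx0.1, le_of_lt hx0.2⟩
    · exact ⟨le_of_lt hx1.1, le_of_lt hx1.2⟩
  exact interior_maximal hsub hopen ⟨h0, h1⟩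

/-- The horizontal slice of `H` at height `y`. -/
def slice (y : ℝ) : Set ℝ := {t : ℝ | mk2 t y ∈ H}

lemma slice_eq (hH : H = ⋃ i, (fun x => c i + x) '' unitSquare) (y : ℝ) :
    slice H y = ⋃ i ∈ Finset.univ.filter (fun i : Fin n => y ∈ Set.Icc (c i 1) (c i 1 + 1)),
      Set.Icc (c i 0) (c i 0 + 1) := by
  classical
  ext t
  simp only [slice, Set.mem_setOf_eq, mem_H_iff c H hH, Set.mem_iUnion, Finset.mem_filter,
    Finset.mem_univ, true_and, exists_prop]
  constructor
  · rintro ⟨i, hi⟩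
    exact ⟨i, hi 1, hi 0⟩
  · rintro ⟨i, hy, ht⟩
    refine ⟨i, fun j => ?_⟩
    fin_cases j
    · exact ht
    · exact hy

/-- For a "good" height `y`, a frontier point of `H` on the horizontal line at height `y`
is a non-interior point of the slice. -/
lemma not_mem_interior_slice (hn : 1 ≤ n) (hH : H = ⋃ i, (fun x => c i + x) '' unitSquare)
    {a y : ℝ} (hgood : ∀ i, y ≠ c i 1 ∧ y ≠ c i 1 + 1)
    (hfront : mk2 a y ∈ frontier H) :
    a ∈ slice H y ∧ a ∉ interior (slice H y) := by
  classical
  have haH : mk2 a y ∈ H := by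
    have := hfront.1
    rwa [(H_closed c H hH).closure_eq] at this
  refine ⟨haH, ?_⟩
  intro hint
  apply hfront.2
  have hne : (Finset.univ : Finset (Fin n)).Nonempty := by
    rw [Finset.univ_nonempty_iff]
    exact Fin.pos_iff_nonempty.1 hn
  set g : Fin n → ℝ := fun i =>
    if c i 1 < y ∧ y < c i 1 + 1 then min (y - c i 1) (c i 1 + 1 - y) else 1 with hg
  set η := Finset.univ.inf' hne g with hη
  have hηpos : 0 < η := by
    apply (Finset.lt_inf'_iff _).2
    intro i _
    simp only [hg]
    split
    · next h => exact lt_min (by linarith [h.1]) (by linarith [h.2])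
    · exact one_pos
  have hcov : ∀ t ∈ slice H y, ∀ y' : ℝ, |y' - y| < η → mk2 t y' ∈ H := by
    intro t ht y' hy'
    obtain ⟨i, hi⟩ := (mem_H_iff c H hH (mk2 t y)).1 ht
    have ht0 : t ∈ Set.Icc (c i 0) (c i 0 + 1) := hi 0
    have hy1 : y ∈ Set.Icc (c i 1) (c i 1 + 1) := hi 1
    have hstrict : c i 1 < y ∧ y < c i 1 + 1 := by
      rcases hy1 with ⟨h1, h2⟩
      exact ⟨lt_of_le_of_ne h1 (Ne.symm (hgood i).1), lt_of_le_of_ne h2 (hgood i).2⟩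
    have hgi : η ≤ g i := Finset.inf'_le _ (Finset.mem_univ i)
    have hgival : g i = min (y - c i 1) (c i 1 + 1 - y) := by simp [hg, hstrict]
    rw [abs_lt] at hy'
    have hy'mem : y' ∈ Set.Icc (c i 1) (c i 1 + 1) := by
      constructor
      · have := min_le_left (y - c i 1) (c i 1 + 1 - y)
        rw [hgival] at hgi
        linarith [hy'.1]
      · have := min_le_right (y - c i 1) (c i 1 + 1 - y)
        rw [hgival] at hgi
        linarith [hy'.2]
    refine (mem_H_iff c H hH (mk2 t y')).2 ⟨i, fun j => ?_⟩
    fin_cases j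
    · exact ht0
    · exact hy'mem
  have hopen : IsOpen ((fun x : EuclideanSpace ℝ (Fin 2) => x 0) ⁻¹' interior (slice H y)
      ∩ (fun x : EuclideanSpace ℝ (Fin 2) => x 1) ⁻¹' Set.Ioo (y - η) (y + η)) :=
    (isOpen_interior.preimage (EuclideanSpace.proj 0).continuous).inter
      (isOpen_Ioo.preimage (EuclideanSpace.proj 1).continuous)
  have hsub : ((fun x : EuclideanSpace ℝ (Fin 2) => x 0) ⁻¹' interior (slice H y)
      ∩ (fun x : EuclideanSpace ℝ (Fin 2) => x 1) ⁻¹' Set.Ioo (y - η) (y + η)) ⊆ H := by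
    rintro x ⟨hx0, hx1⟩
    have : mk2 (x 0) (x 1) ∈ H := by
      apply hcov (x 0) (interior_subset hx0) (x 1)
      rw [abs_lt]
      exact ⟨by linarith [hx1.1], by linarith [hx1.2]⟩
    rwa [← eq_mk2 x] at this
  apply interior_maximal hsub hopen
  refine ⟨hint, ?_⟩
  show (mk2 a y) 1 ∈ Set.Ioo (y - η) (y + η)
  have h11 : (mk2 a y) 1 = y := rfl
  rw [h11]
  exact ⟨by linarith, by linarith⟩

lemma vert_bound (hn : 1 ≤ n) (hH : H = ⋃ i, (fun x => c i + x) '' unitSquare) :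
    μH[1] (frontier H ∩ {x : EuclideanSpace ℝ (Fin 2) | ∃ i, x 0 = c i 0 ∨ x 0 = c i 0 + 1})
      ≤ 2 * volume H := by
  classical
  set A : Finset ℝ := (Finset.image (fun i => c i 0) Finset.univ) ∪
    (Finset.image (fun i => c i 0 + 1) Finset.univ) with hA
  have hcover : frontier H ∩ {x : EuclideanSpace ℝ (Fin 2) | ∃ i, x 0 = c i 0 ∨ x 0 = c i 0 + 1}
      ⊆ ⋃ a ∈ A, (frontier H ∩ {x : EuclideanSpace ℝ (Fin 2) | x 0 = a}) := by
    rintro x ⟨hx1, i, hx2⟩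
    simp only [Set.mem_iUnion]
    rcases hx2 with h | h
    · exact ⟨c i 0, by simp [hA], hx1, h⟩
    · exact ⟨c i 0 + 1, by simp [hA], hx1, h⟩
  set S : ℝ → Set ℝ := fun a => {y : ℝ | mk2 a y ∈ frontier H} with hS
  have hline : ∀ a : ℝ, μH[1] (frontier H ∩ {x : EuclideanSpace ℝ (Fin 2) | x 0 = a})
      = volume (S a) := by
    intro a
    have hrange : Set.range (mk2 a) = {x : EuclideanSpace ℝ (Fin 2) | x 0 = a} := by
      ext x
      constructor
      · rintro ⟨y, rfl⟩; rfl
      · intro hx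
        exact ⟨x 1, by rw [← hx]; exact (eq_mk2 x).symm⟩
    have himg : frontier H ∩ {x : EuclideanSpace ℝ (Fin 2) | x 0 = a}
        = mk2 a '' (mk2 a ⁻¹' frontier H) := by
      rw [Set.image_preimage_eq_inter_range, hrange]
    rw [himg, (isometry_mk2 a).hausdorffMeasure_image (Or.inl zero_le_one),
      ← MeasureTheory.hausdorffMeasure_real]
    rfl
  have hSmeas : ∀ a : ℝ, MeasurableSet (S a) :=
    fun a => (isClosed_frontier.preimage (isometry_mk2 a).continuous).measurableSet
  set G : EuclideanSpace ℝ (Fin 2) ≃ᵐ ℝ × ℝ :=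
    (MeasurableEquiv.toLp 2 (Fin 2 → ℝ)).symm.trans (MeasurableEquiv.piFinTwo (fun _ => ℝ))
    with hG
  have hGP : MeasurePreserving G volume volume :=
    (volume_preserving_piFinTwo (fun _ => ℝ)).comp
      (EuclideanSpace.volume_preserving_symm_measurableEquiv_toLp (Fin 2))
  have hGmk : ∀ t y : ℝ, G (mk2 t y) = (t, y) := fun t y => rfl
  have hHmeas : MeasurableSet H := (H_closed c H hH).measurableSet
  have hGHmeas : MeasurableSet (G '' H) := by
    rw [MeasurableEquiv.image_eq_preimage_symm]
    exact G.symm.measurable hHmeas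
  have hvolH : volume H = ∫⁻ y, volume (slice H y) := by
    have h1 : volume H = volume (G '' H) := by
      rw [← hGP.measure_preimage hGHmeas.nullMeasurableSet]
      congr 1
      exact (G.toEquiv.preimage_image H).symm ▸ rfl
    rw [h1, Measure.volume_eq_prod, Measure.prod_apply_symm hGHmeas]
    apply lintegral_congr
    intro y
    congr 1
    ext t
    simp only [Set.mem_preimage]
    rw [← hGmk t y]
    exact G.injective.mem_set_image
  have hsum : ∑ a ∈ A, volume (S a)
      = ∫⁻ y, ∑ a ∈ A, (S a).indicator 1 y := by
    rw [lintegral_finset_sum]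
    · exact Finset.sum_congr rfl fun a _ => (lintegral_indicator_one (hSmeas a)).symm
    · exact fun a _ => measurable_const.indicator (hSmeas a)
  set Y0 : Set ℝ := ⋃ i : Fin n, {c i 1, c i 1 + 1} with hY0
  have hY0null : volume Y0 = 0 :=
    (Set.finite_iUnion (fun i => (Set.finite_singleton _).insert _)).measure_zero _
  have hae : ∀ᵐ y : ℝ, (∑ a ∈ A, (S a).indicator 1 y) ≤ 2 * volume (slice H y) := by
    rw [ae_iff]
    apply measure_mono_null _ hY0null
    intro y hy
    simp only [Set.mem_setOf_eq, not_le] at hy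
    by_contra hyY0
    refine absurd hy (not_lt.2 ?_)
    have hgood : ∀ i, y ≠ c i 1 ∧ y ≠ c i 1 + 1 := by
      intro i
      constructor <;> intro h <;> exact hyY0 (Set.mem_iUnion.2 ⟨i, by simp [h]⟩)
    have hcardeq : (∑ a ∈ A, (S a).indicator 1 y)
        = ((A.filter fun a => y ∈ S a).card : ℝ≥0∞) := by
      rw [Finset.card_filter, Nat.cast_sum]
      apply Finset.sum_congr rfl
      intro a _
      by_cases h : y ∈ S a <;> simp [Set.indicator_apply, h]
    rw [hcardeq]
    apply card_le_two_mul_volume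
    intro b hb
    have hfront : mk2 b y ∈ frontier H := (Finset.mem_filter.1 hb).2
    obtain ⟨hbK, hbI⟩ := not_mem_interior_slice c H hn hH hgood hfront
    exact boundary_type _ (fun i => c i 0) (slice H y) (slice_eq c H hH y) hbK hbI
  calc μH[1] (frontier H ∩ {x : EuclideanSpace ℝ (Fin 2) | ∃ i, x 0 = c i 0 ∨ x 0 = c i 0 + 1})
      ≤ μH[1] (⋃ a ∈ A, (frontier H ∩ {x : EuclideanSpace ℝ (Fin 2) | x 0 = a})) :=
        measure_mono hcover
    _ ≤ ∑ a ∈ A, μH[1] (frontier H ∩ {x : EuclideanSpace ℝ (Fin 2) | x 0 = a}) :=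
        measure_biUnion_finset_le _ _
    _ = ∑ a ∈ A, volume (S a) := Finset.sum_congr rfl fun a _ => hline a
    _ = ∫⁻ y, ∑ a ∈ A, (S a).indicator 1 y := hsum
    _ ≤ ∫⁻ y, 2 * volume (slice H y) := lintegral_mono_ae hae
    _ = 2 * ∫⁻ y, volume (slice H y) := lintegral_const_mul' _ _ (by simp)
    _ = 2 * volume H := by rw [← hvolH]

end Main

end PerimeterAux

/-- The perimeter to area ratio of the union of finitely many axis-oriented unit
squares in the plane does not exceed 4:  `𝓗¹(frontier H) ≤ 4 · vol(H)`. -/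
theorem perimeter_le_four_mul_area_of_union_axis_parallel_unit_squares
    (n : ℕ) (hn : 1 ≤ n) (c : Fin n → EuclideanSpace ℝ (Fin 2))
    (H : Set (EuclideanSpace ℝ (Fin 2)))
    (hH : H = ⋃ i, (fun x => c i + x) '' unitSquare) :
    μH[1] (frontier H) ≤ 4 * volume H := by
  classical
  open PerimeterAux in
  set σ : EuclideanSpace ℝ (Fin 2) ≃ₗᵢ[ℝ] EuclideanSpace ℝ (Fin 2) :=
    LinearIsometryEquiv.piLpCongrLeft 2 ℝ ℝ (Equiv.swap 0 1) with hσdef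
  have hσ0 : ∀ x : EuclideanSpace ℝ (Fin 2), σ x 0 = x 1 := by
    intro x
    simp [hσdef, LinearIsometryEquiv.piLpCongrLeft_apply, Equiv.piCongrLeft'_apply,
      Equiv.swap_apply_def]
  have hσ1 : ∀ x : EuclideanSpace ℝ (Fin 2), σ x 1 = x 0 := by
    intro x
    simp [hσdef, LinearIsometryEquiv.piLpCongrLeft_apply, Equiv.piCongrLeft'_apply,
      Equiv.swap_apply_def]
  have hσs0 : ∀ x : EuclideanSpace ℝ (Fin 2), σ.symm x 0 = x 1 := by
    intro x
    have := hσ1 (σ.symm x)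
    rw [σ.apply_symm_apply] at this
    exact this.symm
  have hσs1 : ∀ x : EuclideanSpace ℝ (Fin 2), σ.symm x 1 = x 0 := by
    intro x
    have := hσ0 (σ.symm x)
    rw [σ.apply_symm_apply] at this
    exact this.symm
  set c' : Fin n → EuclideanSpace ℝ (Fin 2) := fun i => σ (c i) with hc'
  set H' : Set (EuclideanSpace ℝ (Fin 2)) := σ '' H with hH'def
  have huS : ∀ x : EuclideanSpace ℝ (Fin 2),
      x ∈ unitSquare ↔ (x 0 ∈ Set.Icc (0:ℝ) 1 ∧ x 1 ∈ Set.Icc (0:ℝ) 1) := by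
    intro x
    constructor
    · intro h; exact ⟨h 0, h 1⟩
    · rintro ⟨h0, h1⟩ j; fin_cases j; exacts [h0, h1]
  have hσuS : σ '' unitSquare = unitSquare := by
    apply Set.Subset.antisymm
    · rintro _ ⟨x, hx, rfl⟩
      rw [huS, hσ0, hσ1]
      exact ⟨((huS x).1 hx).2, ((huS x).1 hx).1⟩
    · intro x hx
      refine ⟨σ.symm x, ?_, σ.apply_symm_apply x⟩
      rw [huS, hσs0, hσs1]
      exact ⟨((huS x).1 hx).2, ((huS x).1 hx).1⟩
  have hH' : H' = ⋃ i, (fun x => c' i + x) '' unitSquare := by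
    rw [hH'def, hH, Set.image_iUnion]
    apply Set.iUnion_congr
    intro i
    rw [← Set.image_comp]
    have hcomp : (⇑σ ∘ fun x => c i + x) = (fun x => c' i + x) ∘ ⇑σ := by
      funext x; simp [hc', Function.comp, map_add]
    rw [hcomp, Set.image_comp, hσuS]
  have hHmeas : MeasurableSet H := (PerimeterAux.H_closed c H hH).measurableSet
  have hvol : volume H' = volume H := by
    have h1 : H' = σ.symm ⁻¹' H := by
      rw [hH'def]
      ext z
      constructor
      · rintro ⟨x, hx, rfl⟩
        simpa using hx
      · intro hz
        exact ⟨σ.symm z, hz, σ.apply_symm_apply z⟩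
    rw [h1, (σ.symm.measurePreserving).measure_preimage hHmeas.nullMeasurableSet]
  have hfr : σ '' frontier H = frontier H' := by
    rw [hH'def]
    exact σ.toHomeomorph.image_frontier H
  set Vs : Set (EuclideanSpace ℝ (Fin 2)) :=
    {x | ∃ i, x 0 = c i 0 ∨ x 0 = c i 0 + 1} with hVs
  set Hs : Set (EuclideanSpace ℝ (Fin 2)) :=
    {x | ∃ i, x 1 = c i 1 ∨ x 1 = c i 1 + 1} with hHs
  have hcov : frontier H ⊆ (frontier H ∩ Vs) ∪ (frontier H ∩ Hs) := by
    intro p hp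
    rcases PerimeterAux.frontier_classify c H hH hp with h | h
    · exact Or.inl ⟨hp, h⟩
    · exact Or.inr ⟨hp, h⟩
  have hV : μH[1] (frontier H ∩ Vs) ≤ 2 * volume H :=
    PerimeterAux.vert_bound c H hn hH
  have hHz : μH[1] (frontier H ∩ Hs) ≤ 2 * volume H := by
    have himg : σ '' (frontier H ∩ Hs)
        = frontier H' ∩ {x | ∃ i, x 0 = c' i 0 ∨ x 0 = c' i 0 + 1} := by
      rw [Set.image_inter σ.injective, hfr]
      congr 1
      ext z
      simp only [Set.mem_image, Set.mem_setOf_eq, hHs]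
      constructor
      · rintro ⟨x, ⟨i, hx⟩, rfl⟩
        refine ⟨i, ?_⟩
        rw [hσ0, hc']
        simpa [hσ0] using hx
      · rintro ⟨i, hz⟩
        refine ⟨σ.symm z, ⟨i, ?_⟩, σ.apply_symm_apply z⟩
        rw [hσs1]
        rw [hc'] at hz
        simpa [hσ0] using hz
    calc μH[1] (frontier H ∩ Hs)
        = μH[1] (σ '' (frontier H ∩ Hs)) :=
          (σ.isometry.hausdorffMeasure_image (Or.inl zero_le_one) _).symm
      _ = μH[1] (frontier H' ∩ {x | ∃ i, x 0 = c' i 0 ∨ x 0 = c' i 0 + 1}) := by rw [himg]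
      _ ≤ 2 * volume H' := PerimeterAux.vert_bound c' H' hn hH'
      _ = 2 * volume H := by rw [hvol]
  calc μH[1] (frontier H)
      ≤ μH[1] ((frontier H ∩ Vs) ∪ (frontier H ∩ Hs)) := measure_mono hcov
    _ ≤ μH[1] (frontier H ∩ Vs) + μH[1] (frontier H ∩ Hs) := measure_union_le _ _
    _ ≤ 2 * volume H + 2 * volume H := add_le_add hV hHz
    _ = 4 * volume H := by ring
end

section
/- Let H be the union of finitely many closed disks of radius 1 in ℝ², i.e., H = ⋃_{i=1}^n closedBall(c_i, 1) with n ≥ 1. Then the perimeter-to-area ratio of H does not exceed 2, i.e., 𝓗¹(frontier H) ≤ 2 · vol(H). -/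
open MeasureTheory Set
open scoped NNReal ENNReal

namespace PerimAux

noncomputable section

def cpar (z : ℂ) (θ : ℝ) : ℂ := z + Complex.exp (θ * Complex.I)

lemma hasDerivAt_cpar (z : ℂ) (θ : ℝ) :
    HasDerivAt (cpar z) (Complex.exp (θ * Complex.I) * Complex.I) θ := by
  have h1 : HasDerivAt (fun w : ℂ => Complex.exp (w * Complex.I))
      (Complex.exp ((θ : ℂ) * Complex.I) * Complex.I) (θ : ℂ) := by
    simpa using ((hasDerivAt_id ((θ : ℂ))).mul_const Complex.I).cexp
  have h2 := h1.comp_ofReal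
  exact h2.const_add z

lemma lipschitz_cpar (z : ℂ) : LipschitzWith 1 (cpar z) := by
  apply lipschitzWith_of_nnnorm_deriv_le (fun θ => (hasDerivAt_cpar z θ).differentiableAt)
  intro θ
  rw [(hasDerivAt_cpar z θ).deriv, ← NNReal.coe_le_coe, coe_nnnorm]
  simp [norm_mul, Complex.norm_exp_ofReal_mul_I, Complex.norm_I]

lemma continuous_cpar (z : ℂ) : Continuous (cpar z) := (lipschitz_cpar z).continuous

/-- angles (in `Ioc (-π) π`) of the arc `P ∩ sphere z 1` -/
def anglesIoc (P : Set ℂ) (z : ℂ) : Set ℝ :=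
  cpar z ⁻¹' (P ∩ Metric.sphere z 1) ∩ Ioc (-Real.pi) Real.pi

/-- angles (in the open interval) of the arc `P ∩ sphere z 1` -/
def angles (P : Set ℂ) (z : ℂ) : Set ℝ :=
  cpar z ⁻¹' (P ∩ Metric.sphere z 1) ∩ Ioo (-Real.pi) Real.pi

lemma angles_measurable {P : Set ℂ} (hP : IsClosed P) (z : ℂ) :
    MeasurableSet (angles P z) :=
  (((hP.inter Metric.isClosed_sphere).preimage (continuous_cpar z)).measurableSet).inter
    measurableSet_Ioo

lemma cpar_arg {z x : ℂ} (h : ‖x - z‖ = 1) :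
    cpar z (Complex.arg (x - z)) = x := by
  have h2 := Complex.norm_mul_exp_arg_mul_I (x - z)
  rw [h] at h2
  rw [cpar]
  rw [Complex.ofReal_one, one_mul] at h2
  rw [h2]
  ring

lemma arc_subset_image (P : Set ℂ) (z : ℂ) :
    P ∩ Metric.sphere z 1 ⊆ cpar z '' anglesIoc P z := by
  intro x hx
  have h1 : ‖x - z‖ = 1 := by
    have := hx.2
    rwa [Metric.mem_sphere, Complex.dist_eq] at this
  have h2 := cpar_arg h1
  exact ⟨Complex.arg (x - z), ⟨by rw [Set.mem_preimage, h2]; exact hx, Complex.arg_mem_Ioc _⟩, h2⟩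

lemma hausdorff_arc_le (P : Set ℂ) (z : ℂ) :
    μH[1] (P ∩ Metric.sphere z 1) ≤ volume (angles P z) := by
  calc μH[1] (P ∩ Metric.sphere z 1) ≤ μH[1] (cpar z '' anglesIoc P z) :=
        measure_mono (arc_subset_image P z)
    _ ≤ ((1 : ℝ≥0) : ℝ≥0∞) ^ (1 : ℝ) * μH[1] (anglesIoc P z) :=
        (lipschitz_cpar z).hausdorffMeasure_image_le zero_le_one _
    _ = volume (anglesIoc P z) := by rw [hausdorffMeasure_real]; simp
    _ ≤ volume (angles P z ∪ {Real.pi}) := by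
        apply measure_mono
        rintro θ ⟨hθ1, hθ2, hθ3⟩
        rcases lt_or_eq_of_le hθ3 with h | h
        · exact Or.inl ⟨hθ1, hθ2, h⟩
        · exact Or.inr (by simp [h])
    _ ≤ volume (angles P z) + volume ({Real.pi} : Set ℝ) := measure_union_le _ _
    _ = volume (angles P z) := by simp

/-- open radial sector over a set of angles -/
def sector0 (T : Set ℝ) : Set ℂ :=
  {u : ℂ | ‖u‖ ∈ Ioo (0 : ℝ) 1 ∧ Complex.arg u ∈ T}

lemma sector0_measurable {T : Set ℝ} (hT : MeasurableSet T) : MeasurableSet (sector0 T) := by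
  have : sector0 T = (fun u : ℂ => (‖u‖, Complex.arg u)) ⁻¹' (Ioo (0:ℝ) 1 ×ˢ T) := rfl
  rw [this]
  exact (continuous_norm.measurable.prodMk Complex.measurable_arg)
    (measurableSet_Ioo.prod hT)

lemma mem_sector0_iff {T : Set ℝ} (hT : T ⊆ Ioo (-Real.pi) Real.pi) {u : ℂ} :
    u ∈ sector0 T ↔ ∃ s ∈ Ioo (0:ℝ) 1, ∃ θ ∈ T, u = (s : ℂ) * Complex.exp (θ * Complex.I) := by
  constructor
  · rintro ⟨h1, h2⟩
    exact ⟨‖u‖, h1, Complex.arg u, h2, (Complex.norm_mul_exp_arg_mul_I u).symm⟩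
  · rintro ⟨s, hs, θ, hθ, rfl⟩
    have hexp : Complex.exp ((θ : ℂ) * Complex.I)
        = Complex.cos θ + Complex.sin θ * Complex.I := Complex.exp_mul_I _
    constructor
    · show ‖_‖ ∈ _
      rw [norm_mul, Complex.norm_real, Real.norm_eq_abs, Complex.norm_exp_ofReal_mul_I, mul_one,
        abs_of_pos hs.1]
      exact hs
    · show Complex.arg _ ∈ _
      rw [hexp, Complex.arg_real_mul _ hs.1,
        Complex.arg_cos_add_sin_mul_I (Ioo_subset_Ioc_self (hT hθ))]
      exact hθ

lemma volume_sector0 {T : Set ℝ} (hm : MeasurableSet T) (hsub : T ⊆ Ioo (-Real.pi) Real.pi) :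
    volume T = 2 * volume (sector0 T) := by
  have hS : MeasurableSet (sector0 T) := sector0_measurable hm
  -- finiteness
  have hTfin : volume T ≠ ⊤ :=
    (lt_of_le_of_lt (measure_mono hsub) measure_Ioo_lt_top).ne
  have hSfin : volume (sector0 T) ≠ ⊤ := by
    refine (lt_of_le_of_lt (measure_mono ?_) (measure_ball_lt_top (x := (0:ℂ)) (r := 1))).ne
    rintro u ⟨h1, _⟩
    simpa [Metric.mem_ball, Complex.dist_eq] using h1.2
  -- the integral identity
  have key := Complex.integral_comp_polarCoord_symm ((sector0 T).indicator fun _ => (1:ℝ))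
  have hrhs : ∫ p, (sector0 T).indicator (fun _ => (1:ℝ)) p = (volume (sector0 T)).toReal := by
    rw [integral_indicator_const (1:ℝ) hS]
    simp
    rfl
  set X : Set (ℝ × ℝ) := Ioo (0:ℝ) 1 ×ˢ T with hX
  have hXm : MeasurableSet X := measurableSet_Ioo.prod hm
  have hXsub : X ⊆ polarCoord.target := by
    rintro ⟨r, θ⟩ ⟨h1, h2⟩
    exact ⟨h1.1, hsub h2⟩
  have hlhs : (∫ p in polarCoord.target,
      p.1 • (sector0 T).indicator (fun _ => (1:ℝ)) (Complex.polarCoord.symm p))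
      = (volume T).toReal / 2 := by
    have hcongr : ∀ p ∈ polarCoord.target,
        p.1 • (sector0 T).indicator (fun _ => (1:ℝ)) (Complex.polarCoord.symm p)
        = X.indicator (fun q : ℝ × ℝ => q.1) p := by
      rintro ⟨r, θ⟩ ⟨hr, hθ⟩
      simp only [Set.mem_Ioi] at hr
      have hmem : Complex.polarCoord.symm (r, θ) ∈ sector0 T ↔ (r, θ) ∈ X := by
        rw [Complex.polarCoord_symm_apply]
        constructor
        · rintro ⟨h1, h2⟩
          -- abs = |r| = r, arg = θ
          have habs : ‖(r:ℂ) * (Real.cos θ + Real.sin θ * Complex.I)‖ = r := by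
            have := Complex.norm_polarCoord_symm (r, θ)
            rw [Complex.polarCoord_symm_apply] at this
            simpa [abs_of_pos hr] using this
          have harg : Complex.arg ((r:ℂ) * (Real.cos θ + Real.sin θ * Complex.I)) = θ := by
            rw [Complex.arg_real_mul _ hr, Complex.ofReal_cos, Complex.ofReal_sin,
              Complex.arg_cos_add_sin_mul_I (Ioo_subset_Ioc_self hθ)]
          rw [habs] at h1
          rw [harg] at h2
          exact ⟨h1, h2⟩
        · rintro ⟨h1, h2⟩
          constructor
          · show ‖_‖ ∈ _
            have := Complex.norm_polarCoord_symm (r, θ)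
            rw [Complex.polarCoord_symm_apply] at this
            rw [this, abs_of_pos hr]
            exact h1
          · show Complex.arg _ ∈ _
            rw [Complex.arg_real_mul _ hr, Complex.ofReal_cos, Complex.ofReal_sin,
              Complex.arg_cos_add_sin_mul_I (Ioo_subset_Ioc_self hθ)]
            exact h2
      by_cases hin : (r, θ) ∈ X
      · rw [Set.indicator_of_mem (hmem.mpr hin), Set.indicator_of_mem hin]
        simp
      · rw [Set.indicator_of_notMem (fun h => hin (hmem.mp h)), Set.indicator_of_notMem hin]
        simp
    rw [setIntegral_congr_fun (by exact measurableSet_Ioi.prod measurableSet_Ioo) hcongr]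
    rw [setIntegral_indicator hXm, Set.inter_eq_self_of_subset_right hXsub]
    have : (∫ p in X, p.1) = (∫ x in Ioo (0:ℝ) 1, x) * ∫ y in T, (1:ℝ) := by
      rw [hX, ← setIntegral_prod_mul (fun x : ℝ => x) (fun _ : ℝ => (1:ℝ)) (Ioo (0:ℝ) 1) T,
        Measure.volume_eq_prod ℝ ℝ]
      simp
    rw [this]
    have h1 : (∫ x in Ioo (0:ℝ) 1, x) = 1/2 := by
      rw [← MeasureTheory.integral_Ioc_eq_integral_Ioo,
        ← intervalIntegral.integral_of_le (by norm_num : (0:ℝ) ≤ 1)]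
      simp [integral_id]
    have h2 : (∫ y in T, (1:ℝ)) = (volume T).toReal := by
      simp [setIntegral_const]
      rfl
    rw [h1, h2]
    ring
  rw [hrhs, hlhs] at key
  have hmulfin : (2 : ℝ≥0∞) * volume (sector0 T) ≠ ⊤ :=
    ENNReal.mul_ne_top (by norm_num) hSfin
  rw [← ENNReal.toReal_eq_toReal_iff' hTfin hmulfin, ENNReal.toReal_mul, ENNReal.toReal_ofNat]
  linarith

/-- The radial sector at center `z` over the arc `P ∩ sphere z 1`. -/
def sector (P : Set ℂ) (z : ℂ) : Set ℂ := (· - z) ⁻¹' sector0 (angles P z)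

lemma sector_measurable {P : Set ℂ} (hP : IsClosed P) (z : ℂ) :
    MeasurableSet (sector P z) :=
  (sector0_measurable (angles_measurable hP z)).preimage (measurable_id.sub_const z)

lemma volume_sector_eq (P : Set ℂ) (z : ℂ) :
    volume (sector P z) = volume (sector0 (angles P z)) := by
  have : sector P z = (fun v : ℂ => v + (-z)) ⁻¹' sector0 (angles P z) := by
    simp [sector, sub_eq_add_neg]
  rw [this, measure_preimage_add_right]

lemma sector_subset_ball (P : Set ℂ) (z : ℂ) : sector P z ⊆ Metric.ball z 1 := by
  rintro v ⟨h1, _⟩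
  rw [Metric.mem_ball, Complex.dist_eq]
  exact h1.2

lemma mem_sector_iff {P : Set ℂ} {z v : ℂ} :
    v ∈ sector P z ↔ ∃ s ∈ Ioo (0:ℝ) 1, ∃ θ ∈ angles P z,
      v - z = (s : ℂ) * Complex.exp (θ * Complex.I) := by
  rw [sector, Set.mem_preimage]
  exact mem_sector0_iff fun θ hθ => hθ.2

lemma sector_disjoint {P : Set ℂ} {z y : ℂ} (hzy : z ≠ y)
    (hfz : ∀ x ∈ P, 1 ≤ ‖x - z‖) (hfy : ∀ x ∈ P, 1 ≤ ‖x - y‖) :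
    Disjoint (sector P z) (sector P y) := by
  rw [Set.disjoint_left]
  rintro v hvz hvy
  rw [mem_sector_iff] at hvz hvy
  obtain ⟨s, hs, α, hα, hvz⟩ := hvz
  obtain ⟨t, ht, β, hβ, hvy⟩ := hvy
  set eα := Complex.exp ((α : ℂ) * Complex.I) with heα
  set eβ := Complex.exp ((β : ℂ) * Complex.I) with heβ
  have hxP : z + eα ∈ P := hα.1.1
  have hx'P : y + eβ ∈ P := hβ.1.1
  have habsα : ‖eα‖ = 1 := Complex.norm_exp_ofReal_mul_I α
  have habsβ : ‖eβ‖ = 1 := Complex.norm_exp_ofReal_mul_I β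
  -- distances
  have hxv : (z + eα) - v = ((1 - s : ℝ) : ℂ) * eα := by
    push_cast
    linear_combination -hvz
  have hx'v : (y + eβ) - v = ((1 - t : ℝ) : ℂ) * eβ := by
    push_cast
    linear_combination -hvy
  have habs_xv : ‖(z + eα) - v‖ = 1 - s := by
    rw [hxv, norm_mul, Complex.norm_real, Real.norm_eq_abs, habsα, mul_one, abs_of_pos (by linarith [hs.2])]
  have habs_x'v : ‖(y + eβ) - v‖ = 1 - t := by
    rw [hx'v, norm_mul, Complex.norm_real, Real.norm_eq_abs, habsβ, mul_one, abs_of_pos (by linarith [ht.2])]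
  have habs_vz : ‖v - z‖ = s := by
    rw [hvz, norm_mul, Complex.norm_real, Real.norm_eq_abs, habsα, mul_one, abs_of_pos hs.1]
  have habs_vy : ‖v - y‖ = t := by
    rw [hvy, norm_mul, Complex.norm_real, Real.norm_eq_abs, habsβ, mul_one, abs_of_pos ht.1]
  -- triangle inequalities force s = t
  have htri1 : ‖(z + eα) - y‖ ≤ (1 - s) + t := by
    calc ‖(z + eα) - y‖ = ‖((z + eα) - v) + (v - y)‖ := by ring_nf
      _ ≤ ‖(z + eα) - v‖ + ‖v - y‖ := norm_add_le _ _
      _ = (1 - s) + t := by rw [habs_xv, habs_vy]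
  have htri2 : ‖(y + eβ) - z‖ ≤ (1 - t) + s := by
    calc ‖(y + eβ) - z‖ = ‖((y + eβ) - v) + (v - z)‖ := by ring_nf
      _ ≤ ‖(y + eβ) - v‖ + ‖v - z‖ := norm_add_le _ _
      _ = (1 - t) + s := by rw [habs_x'v, habs_vz]
  have hge1 : 1 ≤ ‖(z + eα) - y‖ := hfy _ hxP
  have hge2 : 1 ≤ ‖(y + eβ) - z‖ := hfz _ hx'P
  have hst : s = t := le_antisymm (by linarith) (by linarith)
  subst hst
  -- equality in the triangle inequality : same ray
  have hray : SameRay ℝ (((z + eα) - v)) ((v - y)) := by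
    apply sameRay_iff_norm_add.mpr
    have h9 : ((z + eα) - v) + (v - y) = (z + eα) - y := by ring
    rw [h9]
    rw [habs_xv, habs_vy]
    have : ‖(z + eα) - y‖ = 1 := le_antisymm (by linarith) hge1
    rw [this]; ring
  have hsm := hray.norm_smul_eq
  simp only [habs_xv, habs_vy, Complex.real_smul] at hsm
  -- deduce eα = eβ
  have heq : eα = eβ := by
    have h1s : ((1 - s : ℝ) : ℂ) ≠ 0 := by
      simp only [ne_eq, Complex.ofReal_eq_zero]
      linarith [hs.2]
    have hs0 : ((s : ℝ) : ℂ) ≠ 0 := by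
      simp only [ne_eq, Complex.ofReal_eq_zero]
      linarith [hs.1]
    apply mul_left_cancel₀ (mul_ne_zero h1s hs0)
    rw [hxv, hvy] at hsm
    push_cast at hsm ⊢
    linear_combination -hsm
  -- hence z = y
  apply hzy
  have h10 : v - z = v - y := by rw [hvz, hvy, heq]
  exact sub_right_injective h10


theorem perim_complex (n : ℕ) (w : Fin n → ℂ) (K : Set ℂ)
    (hK : K = ⋃ i, Metric.closedBall (w i) 1) :
    μH[1] (frontier K) ≤ 2 * volume K := by
  classical
  set C : Finset ℂ := Finset.image w Finset.univ with hC
  have hKclosed : IsClosed K := by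
    rw [hK]; exact isClosed_iUnion_of_finite fun i => Metric.isClosed_closedBall
  set P := frontier K with hPdef
  have hPc : IsClosed P := isClosed_frontier
  have hball : ∀ z ∈ C, Metric.ball z 1 ⊆ K := by
    intro z hz
    rw [hC, Finset.mem_image] at hz
    obtain ⟨i, -, rfl⟩ := hz
    rw [hK]
    exact Metric.ball_subset_closedBall.trans (subset_iUnion (fun j => Metric.closedBall (w j) 1) i)
  have hfar : ∀ z ∈ C, ∀ x ∈ P, 1 ≤ ‖x - z‖ := by
    intro z hz x hx
    by_contra h
    push_neg at h
    have hx' : x ∈ Metric.ball z 1 := by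
      rw [Metric.mem_ball, Complex.dist_eq]; exact h
    have hxint : x ∈ interior K := interior_maximal (hball z hz) Metric.isOpen_ball hx'
    have hxfr : x ∈ frontier K := hx
    exact hxfr.2 hxint
  have hcover : P ⊆ ⋃ z ∈ C, (P ∩ Metric.sphere z 1) := by
    intro x hx
    have hxK : x ∈ K := hKclosed.frontier_subset hx
    rw [hK, mem_iUnion] at hxK
    obtain ⟨i, hi⟩ := hxK
    have hiC : w i ∈ C := by rw [hC]; exact Finset.mem_image_of_mem w (Finset.mem_univ i)
    have h1 : dist x (w i) ≤ 1 := by rwa [Metric.mem_closedBall] at hi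
    have h2 : 1 ≤ dist x (w i) := by
      have := hfar (w i) hiC x hx
      rw [Complex.dist_eq]
      exact this
    exact mem_biUnion hiC ⟨hx, by rw [Metric.mem_sphere]; linarith⟩
  have hsecmeas : ∀ z ∈ C, MeasurableSet (sector P z) := fun z _ => sector_measurable hPc z
  have hdisj : (C : Set ℂ).PairwiseDisjoint (sector P) := by
    intro z hz y hy hzy
    exact sector_disjoint hzy (fun x hx => hfar z (by exact_mod_cast hz) x hx)
      (fun x hx => hfar y (by exact_mod_cast hy) x hx)
  calc μH[1] P ≤ μH[1] (⋃ z ∈ C, (P ∩ Metric.sphere z 1)) := measure_mono hcover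
    _ ≤ ∑ z ∈ C, μH[1] (P ∩ Metric.sphere z 1) := measure_biUnion_finset_le C _
    _ ≤ ∑ z ∈ C, 2 * volume (sector P z) := by
        apply Finset.sum_le_sum
        intro z _
        calc μH[1] (P ∩ Metric.sphere z 1) ≤ volume (angles P z) := hausdorff_arc_le P z
          _ = 2 * volume (sector0 (angles P z)) :=
              volume_sector0 (angles_measurable hPc z) inter_subset_right
          _ = 2 * volume (sector P z) := by rw [volume_sector_eq]
    _ = 2 * ∑ z ∈ C, volume (sector P z) := by rw [Finset.mul_sum]
    _ = 2 * volume (⋃ z ∈ C, sector P z) := by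
        rw [measure_biUnion_finset hdisj hsecmeas]
    _ ≤ 2 * volume K := by
        gcongr
        exact iUnion₂_subset fun z hz => (sector_subset_ball P z).trans (hball z hz)

end

end PerimAux

set_option maxHeartbeats 1000000 in
open PerimAux in
/-- The perimeter to area ratio of the union of finitely many closed unit disks in
the plane does not exceed 2: `𝓗¹(frontier H) ≤ 2 · vol(H)`. -/
theorem perimeter_le_two_mul_area_of_union_unit_disks
    (n : ℕ) (hn : 1 ≤ n) (c : Fin n → EuclideanSpace ℝ (Fin 2))
    (H : Set (EuclideanSpace ℝ (Fin 2)))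
    (hH : H = ⋃ i, Metric.closedBall (c i) 1) :
    μH[1] (frontier H) ≤ 2 * volume H := by
  set e : ℂ ≃ₗᵢ[ℝ] EuclideanSpace ℝ (Fin 2) := Complex.orthonormalBasisOneI.repr with he
  set K : Set ℂ := ⇑e ⁻¹' H with hKdef
  have hKe : K = ⋃ i, Metric.closedBall (e.symm (c i)) 1 := by
    rw [hKdef, hH, preimage_iUnion]
    refine iUnion_congr fun i => ?_
    ext v
    rw [Set.mem_preimage, Metric.mem_closedBall, Metric.mem_closedBall,
      ← e.symm.dist_map (e v) (c i), e.symm_apply_apply]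
  have hfr : frontier K = ⇑e ⁻¹' frontier H := by
    rw [hKdef]
    exact (e.toHomeomorph.preimage_frontier H).symm
  have h1 : μH[1] (frontier H) = μH[1] (frontier K) := by
    rw [hfr]
    exact (e.toIsometryEquiv.hausdorffMeasure_preimage 1 (frontier H)).symm
  have hm : NullMeasurableSet H volume := by
    rw [hH]
    exact (MeasurableSet.iUnion fun i => measurableSet_closedBall).nullMeasurableSet
  have h2 : volume K = volume H := e.measurePreserving.measure_preimage hm
  rw [h1, ← h2]
  exact perim_complex n (fun i => e.symm (c i)) K hKe
end

section
/- There exist compact convex sets E₁ and E₂ in ℝ², each with nonempty interior, such that E₂ is congruent to E₁ (i.e., E₂ is the image of E₁ under an isometry of ℝ²), and the perimeter-to-area ratio of E₁ ∪ E₂ strictly exceeds the perimeter-to-area ratio of E₁; that is, 𝓗¹(frontier(E₁ ∪ E₂)) · vol(E₁) > 𝓗¹(frontier E₁) · vol(E₁ ∪ E₂). -/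
open MeasureTheory Set

noncomputable section
namespace Gyenes

abbrev Pt := EuclideanSpace ℝ (Fin 2)

def pt (a b : ℝ) : Pt := (WithLp.equiv 2 (Fin 2 → ℝ)).symm ![a, b]

@[simp] lemma pt_zero (a b : ℝ) : pt a b 0 = a := by simp [pt]
@[simp] lemma pt_one (a b : ℝ) : pt a b 1 = b := by simp [pt]

lemma pt_ext {p q : Pt} (h0 : p 0 = q 0) (h1 : p 1 = q 1) : p = q := by
  ext i
  fin_cases i
  · exact h0
  · exact h1

lemma pt_ne {a b c d : ℝ} (h : a ≠ c ∨ b ≠ d) : pt a b ≠ pt c d := by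
  intro he
  rcases h with h | h
  · exact h (by simpa using congrArg (fun x : Pt => x 0) he)
  · exact h (by simpa using congrArg (fun x : Pt => x 1) he)

def E1 : Set Pt := {p | 0 ≤ p 1 ∧ p 0 ≤ 40 ∧ 4 * p 1 ≤ p 0}
def E2 : Set Pt := {p | p 1 ≤ 8 ∧ 24 ≤ p 0 ∧ p 0 - 32 ≤ 4 * p 1}

lemma cont_coord (i : Fin 2) : Continuous fun p : Pt => p i :=
  (EuclideanSpace.proj (𝕜 := ℝ) i).continuous

/-! ### Volume computations -/

def me : Pt ≃ᵐ (ℝ × ℝ) :=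
  (MeasurableEquiv.toLp 2 (Fin 2 → ℝ)).symm.trans MeasurableEquiv.finTwoArrow
lemma me_apply (p : Pt) : me p = (p 0, p 1) := rfl
lemma mp : MeasurePreserving me volume volume :=
  (EuclideanSpace.volume_preserving_symm_measurableEquiv_toLp _).trans (volume_preserving_finTwoArrow ℝ)

def W (a b α β γ δ : ℝ) : Set (ℝ × ℝ) :=
  {q : ℝ × ℝ | q.1 ∈ Icc a b ∧ q.2 ∈ Icc (α * q.1 + β) (γ * q.1 + δ)}

lemma W_meas (a b α β γ δ : ℝ) : MeasurableSet (W a b α β γ δ) := by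
  apply MeasurableSet.inter
  · exact (measurable_fst) measurableSet_Icc
  · exact ((measurableSet_le (by fun_prop) measurable_snd).inter
      (measurableSet_le measurable_snd (by fun_prop)))

lemma lintegral_linear (c d a b : ℝ) (hab : a ≤ b)
    (h : ∀ x ∈ Icc a b, 0 ≤ c * x + d) :
    ∫⁻ x in Icc a b, ENNReal.ofReal (c * x + d) =
      ENNReal.ofReal (c * (b ^ 2 - a ^ 2) / 2 + d * (b - a)) := by
  have hcont : Continuous fun x : ℝ => c * x + d := by continuity
  rw [← ofReal_integral_eq_lintegral_ofReal (hcont.integrableOn_Icc)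
      ((ae_restrict_iff' measurableSet_Icc).2 (Filter.Eventually.of_forall h))]
  congr 1
  rw [MeasureTheory.integral_Icc_eq_integral_Ioc, ← intervalIntegral.integral_of_le hab]
  rw [intervalIntegral.integral_add ((intervalIntegral.intervalIntegrable_id).const_mul c)
      (intervalIntegrable_const), intervalIntegral.integral_const_mul, integral_id,
      intervalIntegral.integral_const, smul_eq_mul]
  ring

lemma volume_W (a b α β γ δ : ℝ) (hab : a ≤ b)
    (h : ∀ x ∈ Icc a b, 0 ≤ (γ - α) * x + (δ - β)) :
    volume (W a b α β γ δ) =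
      ENNReal.ofReal ((γ - α) * (b ^ 2 - a ^ 2) / 2 + (δ - β) * (b - a)) := by
  rw [MeasureTheory.Measure.volume_eq_prod ℝ ℝ, Measure.prod_apply (W_meas a b α β γ δ)]
  have hslice : ∀ x : ℝ, volume (Prod.mk x ⁻¹' W a b α β γ δ) =
      (Icc a b).indicator (fun x => ENNReal.ofReal ((γ - α) * x + (δ - β))) x := by
    intro x
    by_cases hx : x ∈ Icc a b
    · have : Prod.mk x ⁻¹' W a b α β γ δ = Icc (α * x + β) (γ * x + δ) := by
        ext y
        simp only [W, mem_setOf_eq, mem_Icc, mem_preimage]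
        exact ⟨fun ⟨_, h2⟩ => h2, fun h2 => ⟨⟨hx.1, hx.2⟩, h2⟩⟩
      rw [this, Real.volume_Icc, indicator_of_mem hx]
      congr 1; ring
    · have : Prod.mk x ⁻¹' W a b α β γ δ = ∅ := by
        ext y
        simp only [W, mem_setOf_eq, mem_preimage, mem_empty_iff_false, iff_false, not_and]
        intro h1 _; exact (hx h1).elim
      rw [this, indicator_of_notMem hx]; simp
  simp_rw [hslice]
  rw [lintegral_indicator measurableSet_Icc]
  exact lintegral_linear _ _ _ _ hab h

lemma volume_E1 : volume E1 = ENNReal.ofReal 200 := by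
  have hE : E1 = me ⁻¹' (W 0 40 0 0 (1/4) 0) := by
    ext p
    simp only [E1, W, mem_setOf_eq, mem_preimage, me_apply, mem_Icc]
    constructor
    · rintro ⟨h1, h2, h3⟩
      exact ⟨⟨by linarith, h2⟩, by linarith, by linarith⟩
    · rintro ⟨⟨h1, h2⟩, h3, h4⟩
      exact ⟨by linarith, h2, by linarith⟩
  rw [hE, mp.measure_preimage (W_meas _ _ _ _ _ _).nullMeasurableSet,
    volume_W 0 40 0 0 (1/4) 0 (by norm_num) (fun x hx => by simp at hx; nlinarith [hx.1])]
  norm_num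

lemma volume_union_le : volume (E1 ∪ E2) ≤ ENNReal.ofReal 288 := by
  have hsub : E1 ∪ E2 ⊆ me ⁻¹'
      (W 0 24 0 0 (1/4) 0 ∪ W 24 32 (1/4) (-8) 0 8 ∪ W 32 40 0 0 (1/4) 0 ∪ W 40 64 (1/4) (-8) 0 8) := by
    rintro p (⟨h1, h2, h3⟩ | ⟨h1, h2, h3⟩) <;>
      simp only [mem_preimage, me_apply, mem_union, W, mem_setOf_eq, mem_Icc]
    · rcases le_total (p 0) 24 with h4 | h4
      · exact Or.inl <| Or.inl <| Or.inl ⟨⟨by linarith, h4⟩, by linarith, by linarith⟩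
      · rcases le_total (p 0) 32 with h5 | h5
        · exact Or.inl <| Or.inl <| Or.inr ⟨⟨h4, h5⟩, by linarith, by linarith⟩
        · exact Or.inl <| Or.inr ⟨⟨h5, h2⟩, by linarith, by linarith⟩
    · rcases le_total (p 0) 32 with h4 | h4
      · exact Or.inl <| Or.inl <| Or.inr ⟨⟨h2, h4⟩, by linarith, by linarith⟩
      · rcases le_total (p 0) 40 with h5 | h5
        · exact Or.inl <| Or.inr ⟨⟨h4, h5⟩, by linarith, by linarith⟩
        · exact Or.inr ⟨⟨h5, by linarith⟩, by linarith, by linarith⟩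
  calc volume (E1 ∪ E2) ≤ volume (me ⁻¹'
      (W 0 24 0 0 (1/4) 0 ∪ W 24 32 (1/4) (-8) 0 8 ∪ W 32 40 0 0 (1/4) 0 ∪ W 40 64 (1/4) (-8) 0 8)) :=
        measure_mono hsub
    _ = volume (W 0 24 0 0 (1/4) 0 ∪ W 24 32 (1/4) (-8) 0 8 ∪ W 32 40 0 0 (1/4) 0 ∪ W 40 64 (1/4) (-8) 0 8) :=
        mp.measure_preimage (((((W_meas _ _ _ _ _ _).union (W_meas _ _ _ _ _ _)).union
          (W_meas _ _ _ _ _ _)).union (W_meas _ _ _ _ _ _)).nullMeasurableSet)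
    _ ≤ volume (W 0 24 0 0 (1/4) 0) + volume (W 24 32 (1/4) (-8) 0 8) +
        volume (W 32 40 0 0 (1/4) 0) + volume (W 40 64 (1/4) (-8) 0 8) := by
        refine le_trans (measure_union_le _ _) ?_
        refine add_le_add (le_trans (measure_union_le _ _) ?_) le_rfl
        exact add_le_add (measure_union_le _ _) le_rfl
    _ ≤ ENNReal.ofReal 288 := by
        rw [volume_W 0 24 0 0 (1/4) 0 (by norm_num) (fun x hx => by simp at hx; nlinarith [hx.1]),
          volume_W 24 32 (1/4) (-8) 0 8 (by norm_num) (fun x hx => by simp at hx; nlinarith [hx.2]),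
          volume_W 32 40 0 0 (1/4) 0 (by norm_num) (fun x hx => by simp at hx; nlinarith [hx.1]),
          volume_W 40 64 (1/4) (-8) 0 8 (by norm_num) (fun x hx => by simp at hx; nlinarith [hx.2]),
          ← ENNReal.ofReal_add (by norm_num) (by norm_num),
          ← ENNReal.ofReal_add (by norm_num) (by norm_num),
          ← ENNReal.ofReal_add (by norm_num) (by norm_num)]
        norm_num

/-! ### Segments -/

def sg (A B : Pt) (s : Set ℝ) : Set Pt := AffineMap.lineMap A B '' s

lemma lineMap_coord (A B : Pt) (t : ℝ) (i : Fin 2) :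
    AffineMap.lineMap A B t i = A i + t * (B i - A i) := by
  simp only [AffineMap.lineMap_apply_module]
  simp [PiLp.add_apply, PiLp.smul_apply, PiLp.sub_apply, smul_eq_mul]
  ring

lemma add_smul_coord (p v : Pt) (δ : ℝ) (i : Fin 2) : (p + δ • v) i = p i + δ * v i := by
  simp [PiLp.add_apply, PiLp.smul_apply, smul_eq_mul]

lemma sg_measure (A B : Pt) (s : Set ℝ) : μH[1] (sg A B s) = nndist A B • μH[1] s :=
  MeasureTheory.hausdorffMeasure_lineMap_image A B s

lemma sg_Ioo_measure (A B : Pt) : μH[1] (sg A B (Ioo 0 1)) = edist A B := by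
  rw [sg_measure, MeasureTheory.hausdorffMeasure_real, Real.volume_Ioo, edist_nndist]
  simp [ENNReal.smul_def]

lemma sg_Icc_measure (A B : Pt) : μH[1] (sg A B (Icc 0 1)) = edist A B := by
  rw [sg_measure, MeasureTheory.hausdorffMeasure_real, Real.volume_Icc, edist_nndist]
  simp [ENNReal.smul_def]

lemma sg_Icc_eq_segment (A B : Pt) : sg A B (Icc 0 1) = segment ℝ A B :=
  (segment_eq_image_lineMap ℝ A B).symm

lemma sg_Ioo_measurable {A B : Pt} (h : A ≠ B) : MeasurableSet (sg A B (Ioo 0 1)) := by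
  have himg : sg A B (Ioo 0 1) = sg A B (Icc 0 1) \ {A, B} := by
    rw [sg, sg, ← Icc_diff_both, Set.image_diff (AffineMap.lineMap_injective ℝ h)]
    congr 1
    rw [Set.image_pair]
    simp [AffineMap.lineMap_apply_zero, AffineMap.lineMap_apply_one]
  rw [himg, sg_Icc_eq_segment]
  have hcseg : IsCompact (segment ℝ A B) := by
    rw [segment_eq_image_lineMap]
    exact (isCompact_Icc.image (AffineMap.lineMap_continuous))
  exact hcseg.isClosed.measurableSet.diff (Set.Finite.measurableSet (by simp))

lemma edist_pt (a b c d : ℝ) :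
    edist (pt a b) (pt c d) = ENNReal.ofReal (Real.sqrt ((a - c) ^ 2 + (b - d) ^ 2)) := by
  rw [edist_dist]
  congr 1
  rw [EuclideanSpace.dist_eq, Fin.sum_univ_two]
  congr 2 <;> simp [Real.dist_eq, sq_abs]

lemma mem_frontier_of {S : Set Pt} {p : Pt} (hS : p ∈ S) (h : p ∉ interior S) :
    p ∈ frontier S := ⟨subset_closure hS, h⟩

lemma not_mem_interior_of_dir {S : Set Pt} {p : Pt} (v : Pt)
    (h : ∀ δ : ℝ, 0 < δ → δ ≤ 1 → p + δ • v ∉ S) : p ∉ interior S := by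
  intro hp
  rcases Metric.mem_nhds_iff.1 (mem_interior_iff_mem_nhds.1 hp) with ⟨ε, hε, hball⟩
  set δ := min 1 (ε / (2 * (‖v‖ + 1))) with hδ
  have hδ0 : 0 < δ := lt_min one_pos (by positivity)
  refine h δ hδ0 (min_le_left _ _) (hball ?_)
  rw [Metric.mem_ball, dist_eq_norm, add_sub_cancel_left, norm_smul, Real.norm_eq_abs,
    abs_of_pos hδ0]
  have h1 : δ ≤ ε / (2 * (‖v‖ + 1)) := min_le_right _ _
  have h3 : 0 ≤ ‖v‖ := norm_nonneg v
  calc δ * ‖v‖ ≤ ε / (2 * (‖v‖ + 1)) * ‖v‖ := mul_le_mul_of_nonneg_right h1 h3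
    _ < ε := by
        rw [div_mul_eq_mul_div, div_lt_iff₀ (by positivity)]
        nlinarith

/-! ### The 12 boundary segments of the union -/

lemma segf0 : sg (pt 0 0) (pt 24 0) (Ioo 0 1) ⊆ frontier (E1 ∪ E2) := by
  rintro q ⟨t, ⟨ht0, ht1⟩, rfl⟩
  refine mem_frontier_of ?_ (not_mem_interior_of_dir (pt 0 (-1)) ?_)
  · left
    refine ⟨?_, ?_, ?_⟩ <;>
      simp only [E1, E2, mem_setOf_eq, lineMap_coord, pt_zero, pt_one] <;> linarith
  · intro δ hδ0 hδ1 hmem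
    rcases hmem with h | h <;>
    · simp only [E1, E2, mem_setOf_eq, add_smul_coord, lineMap_coord, pt_zero, pt_one] at h
      obtain ⟨h1, h2, h3⟩ := h
      linarith

lemma segf1 : sg (pt 24 0) (pt 24 (-2)) (Ioo 0 1) ⊆ frontier (E1 ∪ E2) := by
  rintro q ⟨t, ⟨ht0, ht1⟩, rfl⟩
  refine mem_frontier_of ?_ (not_mem_interior_of_dir (pt (-1) 0) ?_)
  · right
    refine ⟨?_, ?_, ?_⟩ <;>
      simp only [E1, E2, mem_setOf_eq, lineMap_coord, pt_zero, pt_one] <;> linarith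
  · intro δ hδ0 hδ1 hmem
    rcases hmem with h | h <;>
    · simp only [E1, E2, mem_setOf_eq, add_smul_coord, lineMap_coord, pt_zero, pt_one] at h
      obtain ⟨h1, h2, h3⟩ := h
      linarith

lemma segf2 : sg (pt 24 (-2)) (pt 32 0) (Ioo 0 1) ⊆ frontier (E1 ∪ E2) := by
  rintro q ⟨t, ⟨ht0, ht1⟩, rfl⟩
  refine mem_frontier_of ?_ (not_mem_interior_of_dir (pt 1 (-1)) ?_)
  · right
    refine ⟨?_, ?_, ?_⟩ <;>
      simp only [E1, E2, mem_setOf_eq, lineMap_coord, pt_zero, pt_one] <;> linarith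
  · intro δ hδ0 hδ1 hmem
    rcases hmem with h | h <;>
    · simp only [E1, E2, mem_setOf_eq, add_smul_coord, lineMap_coord, pt_zero, pt_one] at h
      obtain ⟨h1, h2, h3⟩ := h
      linarith

lemma segf3 : sg (pt 32 0) (pt 40 0) (Ioo 0 1) ⊆ frontier (E1 ∪ E2) := by
  rintro q ⟨t, ⟨ht0, ht1⟩, rfl⟩
  refine mem_frontier_of ?_ (not_mem_interior_of_dir (pt 0 (-1)) ?_)
  · left
    refine ⟨?_, ?_, ?_⟩ <;>
      simp only [E1, E2, mem_setOf_eq, lineMap_coord, pt_zero, pt_one] <;> linarith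
  · intro δ hδ0 hδ1 hmem
    rcases hmem with h | h <;>
    · simp only [E1, E2, mem_setOf_eq, add_smul_coord, lineMap_coord, pt_zero, pt_one] at h
      obtain ⟨h1, h2, h3⟩ := h
      linarith

lemma segf4 : sg (pt 40 0) (pt 40 2) (Ioo 0 1) ⊆ frontier (E1 ∪ E2) := by
  rintro q ⟨t, ⟨ht0, ht1⟩, rfl⟩
  refine mem_frontier_of ?_ (not_mem_interior_of_dir (pt 1 0) ?_)
  · left
    refine ⟨?_, ?_, ?_⟩ <;>
      simp only [E1, E2, mem_setOf_eq, lineMap_coord, pt_zero, pt_one] <;> linarith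
  · intro δ hδ0 hδ1 hmem
    rcases hmem with h | h <;>
    · simp only [E1, E2, mem_setOf_eq, add_smul_coord, lineMap_coord, pt_zero, pt_one] at h
      obtain ⟨h1, h2, h3⟩ := h
      linarith

lemma segf5 : sg (pt 40 2) (pt 64 8) (Ioo 0 1) ⊆ frontier (E1 ∪ E2) := by
  rintro q ⟨t, ⟨ht0, ht1⟩, rfl⟩
  refine mem_frontier_of ?_ (not_mem_interior_of_dir (pt 1 (-1)) ?_)
  · right
    refine ⟨?_, ?_, ?_⟩ <;>
      simp only [E1, E2, mem_setOf_eq, lineMap_coord, pt_zero, pt_one] <;> linarith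
  · intro δ hδ0 hδ1 hmem
    rcases hmem with h | h <;>
    · simp only [E1, E2, mem_setOf_eq, add_smul_coord, lineMap_coord, pt_zero, pt_one] at h
      obtain ⟨h1, h2, h3⟩ := h
      linarith

lemma segf6 : sg (pt 64 8) (pt 40 8) (Ioo 0 1) ⊆ frontier (E1 ∪ E2) := by
  rintro q ⟨t, ⟨ht0, ht1⟩, rfl⟩
  refine mem_frontier_of ?_ (not_mem_interior_of_dir (pt 0 1) ?_)
  · right
    refine ⟨?_, ?_, ?_⟩ <;>
      simp only [E1, E2, mem_setOf_eq, lineMap_coord, pt_zero, pt_one] <;> linarith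
  · intro δ hδ0 hδ1 hmem
    rcases hmem with h | h <;>
    · simp only [E1, E2, mem_setOf_eq, add_smul_coord, lineMap_coord, pt_zero, pt_one] at h
      obtain ⟨h1, h2, h3⟩ := h
      linarith

lemma segf7 : sg (pt 40 8) (pt 40 10) (Ioo 0 1) ⊆ frontier (E1 ∪ E2) := by
  rintro q ⟨t, ⟨ht0, ht1⟩, rfl⟩
  refine mem_frontier_of ?_ (not_mem_interior_of_dir (pt 1 0) ?_)
  · left
    refine ⟨?_, ?_, ?_⟩ <;>
      simp only [E1, E2, mem_setOf_eq, lineMap_coord, pt_zero, pt_one] <;> linarith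
  · intro δ hδ0 hδ1 hmem
    rcases hmem with h | h <;>
    · simp only [E1, E2, mem_setOf_eq, add_smul_coord, lineMap_coord, pt_zero, pt_one] at h
      obtain ⟨h1, h2, h3⟩ := h
      linarith

lemma segf8 : sg (pt 40 10) (pt 32 8) (Ioo 0 1) ⊆ frontier (E1 ∪ E2) := by
  rintro q ⟨t, ⟨ht0, ht1⟩, rfl⟩
  refine mem_frontier_of ?_ (not_mem_interior_of_dir (pt (-1) 1) ?_)
  · left
    refine ⟨?_, ?_, ?_⟩ <;>
      simp only [E1, E2, mem_setOf_eq, lineMap_coord, pt_zero, pt_one] <;> linarith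
  · intro δ hδ0 hδ1 hmem
    rcases hmem with h | h <;>
    · simp only [E1, E2, mem_setOf_eq, add_smul_coord, lineMap_coord, pt_zero, pt_one] at h
      obtain ⟨h1, h2, h3⟩ := h
      linarith

lemma segf9 : sg (pt 32 8) (pt 24 8) (Ioo 0 1) ⊆ frontier (E1 ∪ E2) := by
  rintro q ⟨t, ⟨ht0, ht1⟩, rfl⟩
  refine mem_frontier_of ?_ (not_mem_interior_of_dir (pt 0 1) ?_)
  · right
    refine ⟨?_, ?_, ?_⟩ <;>
      simp only [E1, E2, mem_setOf_eq, lineMap_coord, pt_zero, pt_one] <;> linarith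
  · intro δ hδ0 hδ1 hmem
    rcases hmem with h | h <;>
    · simp only [E1, E2, mem_setOf_eq, add_smul_coord, lineMap_coord, pt_zero, pt_one] at h
      obtain ⟨h1, h2, h3⟩ := h
      linarith

lemma segf10 : sg (pt 24 8) (pt 24 6) (Ioo 0 1) ⊆ frontier (E1 ∪ E2) := by
  rintro q ⟨t, ⟨ht0, ht1⟩, rfl⟩
  refine mem_frontier_of ?_ (not_mem_interior_of_dir (pt (-1) 0) ?_)
  · right
    refine ⟨?_, ?_, ?_⟩ <;>
      simp only [E1, E2, mem_setOf_eq, lineMap_coord, pt_zero, pt_one] <;> linarith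
  · intro δ hδ0 hδ1 hmem
    rcases hmem with h | h <;>
    · simp only [E1, E2, mem_setOf_eq, add_smul_coord, lineMap_coord, pt_zero, pt_one] at h
      obtain ⟨h1, h2, h3⟩ := h
      linarith

lemma segf11 : sg (pt 24 6) (pt 0 0) (Ioo 0 1) ⊆ frontier (E1 ∪ E2) := by
  rintro q ⟨t, ⟨ht0, ht1⟩, rfl⟩
  refine mem_frontier_of ?_ (not_mem_interior_of_dir (pt (-1) 1) ?_)
  · left
    refine ⟨?_, ?_, ?_⟩ <;>
      simp only [E1, E2, mem_setOf_eq, lineMap_coord, pt_zero, pt_one] <;> linarith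
  · intro δ hδ0 hδ1 hmem
    rcases hmem with h | h <;>
    · simp only [E1, E2, mem_setOf_eq, add_smul_coord, lineMap_coord, pt_zero, pt_one] at h
      obtain ⟨h1, h2, h3⟩ := h
      linarith

/-! ### The union of the twelve open segments -/

def Sg0 : Set Pt := sg (pt 0 0) (pt 24 0) (Ioo 0 1)
def Sg1 : Set Pt := sg (pt 24 0) (pt 24 (-2)) (Ioo 0 1)
def Sg2 : Set Pt := sg (pt 24 (-2)) (pt 32 0) (Ioo 0 1)
def Sg3 : Set Pt := sg (pt 32 0) (pt 40 0) (Ioo 0 1)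
def Sg4 : Set Pt := sg (pt 40 0) (pt 40 2) (Ioo 0 1)
def Sg5 : Set Pt := sg (pt 40 2) (pt 64 8) (Ioo 0 1)
def Sg6 : Set Pt := sg (pt 64 8) (pt 40 8) (Ioo 0 1)
def Sg7 : Set Pt := sg (pt 40 8) (pt 40 10) (Ioo 0 1)
def Sg8 : Set Pt := sg (pt 40 10) (pt 32 8) (Ioo 0 1)
def Sg9 : Set Pt := sg (pt 32 8) (pt 24 8) (Ioo 0 1)
def Sg10 : Set Pt := sg (pt 24 8) (pt 24 6) (Ioo 0 1)
def Sg11 : Set Pt := sg (pt 24 6) (pt 0 0) (Ioo 0 1)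

lemma mb0 : MeasurableSet Sg0 := sg_Ioo_measurable (pt_ne (by norm_num))
lemma mb1 : MeasurableSet Sg1 := sg_Ioo_measurable (pt_ne (by norm_num))
lemma mb2 : MeasurableSet Sg2 := sg_Ioo_measurable (pt_ne (by norm_num))
lemma mb3 : MeasurableSet Sg3 := sg_Ioo_measurable (pt_ne (by norm_num))
lemma mb4 : MeasurableSet Sg4 := sg_Ioo_measurable (pt_ne (by norm_num))
lemma mb5 : MeasurableSet Sg5 := sg_Ioo_measurable (pt_ne (by norm_num))
lemma mb6 : MeasurableSet Sg6 := sg_Ioo_measurable (pt_ne (by norm_num))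
lemma mb7 : MeasurableSet Sg7 := sg_Ioo_measurable (pt_ne (by norm_num))
lemma mb8 : MeasurableSet Sg8 := sg_Ioo_measurable (pt_ne (by norm_num))
lemma mb9 : MeasurableSet Sg9 := sg_Ioo_measurable (pt_ne (by norm_num))
lemma mb10 : MeasurableSet Sg10 := sg_Ioo_measurable (pt_ne (by norm_num))
lemma mb11 : MeasurableSet Sg11 := sg_Ioo_measurable (pt_ne (by norm_num))

lemma ms0 : μH[1] Sg0 = ENNReal.ofReal ((24:ℝ)) := by
  rw [Sg0, sg_Ioo_measure, edist_pt]
  congr 1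
  rw [show ((0:ℝ) - 24) ^ 2 + ((0:ℝ) - 0) ^ 2 = (24:ℝ) ^ 2 by norm_num,
    Real.sqrt_sq (by norm_num : (0:ℝ) ≤ 24)]

lemma ms1 : μH[1] Sg1 = ENNReal.ofReal ((2:ℝ)) := by
  rw [Sg1, sg_Ioo_measure, edist_pt]
  congr 1
  rw [show ((24:ℝ) - 24) ^ 2 + ((0:ℝ) - -2) ^ 2 = (2:ℝ) ^ 2 by norm_num,
    Real.sqrt_sq (by norm_num : (0:ℝ) ≤ 2)]

lemma ms2 : μH[1] Sg2 = ENNReal.ofReal (Real.sqrt 68) := by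
  rw [Sg2, sg_Ioo_measure, edist_pt]
  congr 1
  rw [show ((24:ℝ) - 32) ^ 2 + ((-2:ℝ) - 0) ^ 2 = (68:ℝ) by norm_num]

lemma ms3 : μH[1] Sg3 = ENNReal.ofReal ((8:ℝ)) := by
  rw [Sg3, sg_Ioo_measure, edist_pt]
  congr 1
  rw [show ((32:ℝ) - 40) ^ 2 + ((0:ℝ) - 0) ^ 2 = (8:ℝ) ^ 2 by norm_num,
    Real.sqrt_sq (by norm_num : (0:ℝ) ≤ 8)]

lemma ms4 : μH[1] Sg4 = ENNReal.ofReal ((2:ℝ)) := by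
  rw [Sg4, sg_Ioo_measure, edist_pt]
  congr 1
  rw [show ((40:ℝ) - 40) ^ 2 + ((0:ℝ) - 2) ^ 2 = (2:ℝ) ^ 2 by norm_num,
    Real.sqrt_sq (by norm_num : (0:ℝ) ≤ 2)]

lemma ms5 : μH[1] Sg5 = ENNReal.ofReal (Real.sqrt 612) := by
  rw [Sg5, sg_Ioo_measure, edist_pt]
  congr 1
  rw [show ((40:ℝ) - 64) ^ 2 + ((2:ℝ) - 8) ^ 2 = (612:ℝ) by norm_num]

lemma ms6 : μH[1] Sg6 = ENNReal.ofReal ((24:ℝ)) := by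
  rw [Sg6, sg_Ioo_measure, edist_pt]
  congr 1
  rw [show ((64:ℝ) - 40) ^ 2 + ((8:ℝ) - 8) ^ 2 = (24:ℝ) ^ 2 by norm_num,
    Real.sqrt_sq (by norm_num : (0:ℝ) ≤ 24)]

lemma ms7 : μH[1] Sg7 = ENNReal.ofReal ((2:ℝ)) := by
  rw [Sg7, sg_Ioo_measure, edist_pt]
  congr 1
  rw [show ((40:ℝ) - 40) ^ 2 + ((8:ℝ) - 10) ^ 2 = (2:ℝ) ^ 2 by norm_num,
    Real.sqrt_sq (by norm_num : (0:ℝ) ≤ 2)]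

lemma ms8 : μH[1] Sg8 = ENNReal.ofReal (Real.sqrt 68) := by
  rw [Sg8, sg_Ioo_measure, edist_pt]
  congr 1
  rw [show ((40:ℝ) - 32) ^ 2 + ((10:ℝ) - 8) ^ 2 = (68:ℝ) by norm_num]

lemma ms9 : μH[1] Sg9 = ENNReal.ofReal ((8:ℝ)) := by
  rw [Sg9, sg_Ioo_measure, edist_pt]
  congr 1
  rw [show ((32:ℝ) - 24) ^ 2 + ((8:ℝ) - 8) ^ 2 = (8:ℝ) ^ 2 by norm_num,
    Real.sqrt_sq (by norm_num : (0:ℝ) ≤ 8)]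

lemma ms10 : μH[1] Sg10 = ENNReal.ofReal ((2:ℝ)) := by
  rw [Sg10, sg_Ioo_measure, edist_pt]
  congr 1
  rw [show ((24:ℝ) - 24) ^ 2 + ((8:ℝ) - 6) ^ 2 = (2:ℝ) ^ 2 by norm_num,
    Real.sqrt_sq (by norm_num : (0:ℝ) ≤ 2)]

lemma ms11 : μH[1] Sg11 = ENNReal.ofReal (Real.sqrt 612) := by
  rw [Sg11, sg_Ioo_measure, edist_pt]
  congr 1
  rw [show ((24:ℝ) - 0) ^ 2 + ((6:ℝ) - 0) ^ 2 = (612:ℝ) by norm_num]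

lemma dj0_1 : Disjoint Sg0 Sg1 := by
  rw [Sg0, Sg1, Set.disjoint_left]
  rintro p ⟨t, ⟨ht0, ht1⟩, rfl⟩ ⟨s, ⟨hs0, hs1⟩, hq⟩
  have e0 := congrArg (fun x : Pt => x 0) hq
  have e1 := congrArg (fun x : Pt => x 1) hq
  simp only [lineMap_coord, pt_zero, pt_one] at e0 e1
  linarith

lemma dj0_2 : Disjoint Sg0 Sg2 := by
  rw [Sg0, Sg2, Set.disjoint_left]
  rintro p ⟨t, ⟨ht0, ht1⟩, rfl⟩ ⟨s, ⟨hs0, hs1⟩, hq⟩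
  have e0 := congrArg (fun x : Pt => x 0) hq
  have e1 := congrArg (fun x : Pt => x 1) hq
  simp only [lineMap_coord, pt_zero, pt_one] at e0 e1
  linarith

lemma dj0_3 : Disjoint Sg0 Sg3 := by
  rw [Sg0, Sg3, Set.disjoint_left]
  rintro p ⟨t, ⟨ht0, ht1⟩, rfl⟩ ⟨s, ⟨hs0, hs1⟩, hq⟩
  have e0 := congrArg (fun x : Pt => x 0) hq
  have e1 := congrArg (fun x : Pt => x 1) hq
  simp only [lineMap_coord, pt_zero, pt_one] at e0 e1
  linarith

lemma dj0_4 : Disjoint Sg0 Sg4 := by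
  rw [Sg0, Sg4, Set.disjoint_left]
  rintro p ⟨t, ⟨ht0, ht1⟩, rfl⟩ ⟨s, ⟨hs0, hs1⟩, hq⟩
  have e0 := congrArg (fun x : Pt => x 0) hq
  have e1 := congrArg (fun x : Pt => x 1) hq
  simp only [lineMap_coord, pt_zero, pt_one] at e0 e1
  linarith

lemma dj0_5 : Disjoint Sg0 Sg5 := by
  rw [Sg0, Sg5, Set.disjoint_left]
  rintro p ⟨t, ⟨ht0, ht1⟩, rfl⟩ ⟨s, ⟨hs0, hs1⟩, hq⟩
  have e0 := congrArg (fun x : Pt => x 0) hq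
  have e1 := congrArg (fun x : Pt => x 1) hq
  simp only [lineMap_coord, pt_zero, pt_one] at e0 e1
  linarith

lemma dj0_6 : Disjoint Sg0 Sg6 := by
  rw [Sg0, Sg6, Set.disjoint_left]
  rintro p ⟨t, ⟨ht0, ht1⟩, rfl⟩ ⟨s, ⟨hs0, hs1⟩, hq⟩
  have e0 := congrArg (fun x : Pt => x 0) hq
  have e1 := congrArg (fun x : Pt => x 1) hq
  simp only [lineMap_coord, pt_zero, pt_one] at e0 e1
  linarith

lemma dj0_7 : Disjoint Sg0 Sg7 := by
  rw [Sg0, Sg7, Set.disjoint_left]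
  rintro p ⟨t, ⟨ht0, ht1⟩, rfl⟩ ⟨s, ⟨hs0, hs1⟩, hq⟩
  have e0 := congrArg (fun x : Pt => x 0) hq
  have e1 := congrArg (fun x : Pt => x 1) hq
  simp only [lineMap_coord, pt_zero, pt_one] at e0 e1
  linarith

lemma dj0_8 : Disjoint Sg0 Sg8 := by
  rw [Sg0, Sg8, Set.disjoint_left]
  rintro p ⟨t, ⟨ht0, ht1⟩, rfl⟩ ⟨s, ⟨hs0, hs1⟩, hq⟩
  have e0 := congrArg (fun x : Pt => x 0) hq
  have e1 := congrArg (fun x : Pt => x 1) hq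
  simp only [lineMap_coord, pt_zero, pt_one] at e0 e1
  linarith

lemma dj0_9 : Disjoint Sg0 Sg9 := by
  rw [Sg0, Sg9, Set.disjoint_left]
  rintro p ⟨t, ⟨ht0, ht1⟩, rfl⟩ ⟨s, ⟨hs0, hs1⟩, hq⟩
  have e0 := congrArg (fun x : Pt => x 0) hq
  have e1 := congrArg (fun x : Pt => x 1) hq
  simp only [lineMap_coord, pt_zero, pt_one] at e0 e1
  linarith

lemma dj0_10 : Disjoint Sg0 Sg10 := by
  rw [Sg0, Sg10, Set.disjoint_left]
  rintro p ⟨t, ⟨ht0, ht1⟩, rfl⟩ ⟨s, ⟨hs0, hs1⟩, hq⟩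
  have e0 := congrArg (fun x : Pt => x 0) hq
  have e1 := congrArg (fun x : Pt => x 1) hq
  simp only [lineMap_coord, pt_zero, pt_one] at e0 e1
  linarith

lemma dj0_11 : Disjoint Sg0 Sg11 := by
  rw [Sg0, Sg11, Set.disjoint_left]
  rintro p ⟨t, ⟨ht0, ht1⟩, rfl⟩ ⟨s, ⟨hs0, hs1⟩, hq⟩
  have e0 := congrArg (fun x : Pt => x 0) hq
  have e1 := congrArg (fun x : Pt => x 1) hq
  simp only [lineMap_coord, pt_zero, pt_one] at e0 e1
  linarith

lemma dj1_2 : Disjoint Sg1 Sg2 := by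
  rw [Sg1, Sg2, Set.disjoint_left]
  rintro p ⟨t, ⟨ht0, ht1⟩, rfl⟩ ⟨s, ⟨hs0, hs1⟩, hq⟩
  have e0 := congrArg (fun x : Pt => x 0) hq
  have e1 := congrArg (fun x : Pt => x 1) hq
  simp only [lineMap_coord, pt_zero, pt_one] at e0 e1
  linarith

lemma dj1_3 : Disjoint Sg1 Sg3 := by
  rw [Sg1, Sg3, Set.disjoint_left]
  rintro p ⟨t, ⟨ht0, ht1⟩, rfl⟩ ⟨s, ⟨hs0, hs1⟩, hq⟩
  have e0 := congrArg (fun x : Pt => x 0) hq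
  have e1 := congrArg (fun x : Pt => x 1) hq
  simp only [lineMap_coord, pt_zero, pt_one] at e0 e1
  linarith

lemma dj1_4 : Disjoint Sg1 Sg4 := by
  rw [Sg1, Sg4, Set.disjoint_left]
  rintro p ⟨t, ⟨ht0, ht1⟩, rfl⟩ ⟨s, ⟨hs0, hs1⟩, hq⟩
  have e0 := congrArg (fun x : Pt => x 0) hq
  have e1 := congrArg (fun x : Pt => x 1) hq
  simp only [lineMap_coord, pt_zero, pt_one] at e0 e1
  linarith

lemma dj1_5 : Disjoint Sg1 Sg5 := by
  rw [Sg1, Sg5, Set.disjoint_left]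
  rintro p ⟨t, ⟨ht0, ht1⟩, rfl⟩ ⟨s, ⟨hs0, hs1⟩, hq⟩
  have e0 := congrArg (fun x : Pt => x 0) hq
  have e1 := congrArg (fun x : Pt => x 1) hq
  simp only [lineMap_coord, pt_zero, pt_one] at e0 e1
  linarith

lemma dj1_6 : Disjoint Sg1 Sg6 := by
  rw [Sg1, Sg6, Set.disjoint_left]
  rintro p ⟨t, ⟨ht0, ht1⟩, rfl⟩ ⟨s, ⟨hs0, hs1⟩, hq⟩
  have e0 := congrArg (fun x : Pt => x 0) hq
  have e1 := congrArg (fun x : Pt => x 1) hq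
  simp only [lineMap_coord, pt_zero, pt_one] at e0 e1
  linarith

lemma dj1_7 : Disjoint Sg1 Sg7 := by
  rw [Sg1, Sg7, Set.disjoint_left]
  rintro p ⟨t, ⟨ht0, ht1⟩, rfl⟩ ⟨s, ⟨hs0, hs1⟩, hq⟩
  have e0 := congrArg (fun x : Pt => x 0) hq
  have e1 := congrArg (fun x : Pt => x 1) hq
  simp only [lineMap_coord, pt_zero, pt_one] at e0 e1
  linarith

lemma dj1_8 : Disjoint Sg1 Sg8 := by
  rw [Sg1, Sg8, Set.disjoint_left]
  rintro p ⟨t, ⟨ht0, ht1⟩, rfl⟩ ⟨s, ⟨hs0, hs1⟩, hq⟩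
  have e0 := congrArg (fun x : Pt => x 0) hq
  have e1 := congrArg (fun x : Pt => x 1) hq
  simp only [lineMap_coord, pt_zero, pt_one] at e0 e1
  linarith

lemma dj1_9 : Disjoint Sg1 Sg9 := by
  rw [Sg1, Sg9, Set.disjoint_left]
  rintro p ⟨t, ⟨ht0, ht1⟩, rfl⟩ ⟨s, ⟨hs0, hs1⟩, hq⟩
  have e0 := congrArg (fun x : Pt => x 0) hq
  have e1 := congrArg (fun x : Pt => x 1) hq
  simp only [lineMap_coord, pt_zero, pt_one] at e0 e1
  linarith

lemma dj1_10 : Disjoint Sg1 Sg10 := by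
  rw [Sg1, Sg10, Set.disjoint_left]
  rintro p ⟨t, ⟨ht0, ht1⟩, rfl⟩ ⟨s, ⟨hs0, hs1⟩, hq⟩
  have e0 := congrArg (fun x : Pt => x 0) hq
  have e1 := congrArg (fun x : Pt => x 1) hq
  simp only [lineMap_coord, pt_zero, pt_one] at e0 e1
  linarith

lemma dj1_11 : Disjoint Sg1 Sg11 := by
  rw [Sg1, Sg11, Set.disjoint_left]
  rintro p ⟨t, ⟨ht0, ht1⟩, rfl⟩ ⟨s, ⟨hs0, hs1⟩, hq⟩
  have e0 := congrArg (fun x : Pt => x 0) hq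
  have e1 := congrArg (fun x : Pt => x 1) hq
  simp only [lineMap_coord, pt_zero, pt_one] at e0 e1
  linarith

lemma dj2_3 : Disjoint Sg2 Sg3 := by
  rw [Sg2, Sg3, Set.disjoint_left]
  rintro p ⟨t, ⟨ht0, ht1⟩, rfl⟩ ⟨s, ⟨hs0, hs1⟩, hq⟩
  have e0 := congrArg (fun x : Pt => x 0) hq
  have e1 := congrArg (fun x : Pt => x 1) hq
  simp only [lineMap_coord, pt_zero, pt_one] at e0 e1
  linarith

lemma dj2_4 : Disjoint Sg2 Sg4 := by
  rw [Sg2, Sg4, Set.disjoint_left]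
  rintro p ⟨t, ⟨ht0, ht1⟩, rfl⟩ ⟨s, ⟨hs0, hs1⟩, hq⟩
  have e0 := congrArg (fun x : Pt => x 0) hq
  have e1 := congrArg (fun x : Pt => x 1) hq
  simp only [lineMap_coord, pt_zero, pt_one] at e0 e1
  linarith

lemma dj2_5 : Disjoint Sg2 Sg5 := by
  rw [Sg2, Sg5, Set.disjoint_left]
  rintro p ⟨t, ⟨ht0, ht1⟩, rfl⟩ ⟨s, ⟨hs0, hs1⟩, hq⟩
  have e0 := congrArg (fun x : Pt => x 0) hq
  have e1 := congrArg (fun x : Pt => x 1) hq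
  simp only [lineMap_coord, pt_zero, pt_one] at e0 e1
  linarith

lemma dj2_6 : Disjoint Sg2 Sg6 := by
  rw [Sg2, Sg6, Set.disjoint_left]
  rintro p ⟨t, ⟨ht0, ht1⟩, rfl⟩ ⟨s, ⟨hs0, hs1⟩, hq⟩
  have e0 := congrArg (fun x : Pt => x 0) hq
  have e1 := congrArg (fun x : Pt => x 1) hq
  simp only [lineMap_coord, pt_zero, pt_one] at e0 e1
  linarith

lemma dj2_7 : Disjoint Sg2 Sg7 := by
  rw [Sg2, Sg7, Set.disjoint_left]
  rintro p ⟨t, ⟨ht0, ht1⟩, rfl⟩ ⟨s, ⟨hs0, hs1⟩, hq⟩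
  have e0 := congrArg (fun x : Pt => x 0) hq
  have e1 := congrArg (fun x : Pt => x 1) hq
  simp only [lineMap_coord, pt_zero, pt_one] at e0 e1
  linarith

lemma dj2_8 : Disjoint Sg2 Sg8 := by
  rw [Sg2, Sg8, Set.disjoint_left]
  rintro p ⟨t, ⟨ht0, ht1⟩, rfl⟩ ⟨s, ⟨hs0, hs1⟩, hq⟩
  have e0 := congrArg (fun x : Pt => x 0) hq
  have e1 := congrArg (fun x : Pt => x 1) hq
  simp only [lineMap_coord, pt_zero, pt_one] at e0 e1
  linarith

lemma dj2_9 : Disjoint Sg2 Sg9 := by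
  rw [Sg2, Sg9, Set.disjoint_left]
  rintro p ⟨t, ⟨ht0, ht1⟩, rfl⟩ ⟨s, ⟨hs0, hs1⟩, hq⟩
  have e0 := congrArg (fun x : Pt => x 0) hq
  have e1 := congrArg (fun x : Pt => x 1) hq
  simp only [lineMap_coord, pt_zero, pt_one] at e0 e1
  linarith

lemma dj2_10 : Disjoint Sg2 Sg10 := by
  rw [Sg2, Sg10, Set.disjoint_left]
  rintro p ⟨t, ⟨ht0, ht1⟩, rfl⟩ ⟨s, ⟨hs0, hs1⟩, hq⟩
  have e0 := congrArg (fun x : Pt => x 0) hq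
  have e1 := congrArg (fun x : Pt => x 1) hq
  simp only [lineMap_coord, pt_zero, pt_one] at e0 e1
  linarith

lemma dj2_11 : Disjoint Sg2 Sg11 := by
  rw [Sg2, Sg11, Set.disjoint_left]
  rintro p ⟨t, ⟨ht0, ht1⟩, rfl⟩ ⟨s, ⟨hs0, hs1⟩, hq⟩
  have e0 := congrArg (fun x : Pt => x 0) hq
  have e1 := congrArg (fun x : Pt => x 1) hq
  simp only [lineMap_coord, pt_zero, pt_one] at e0 e1
  linarith

lemma dj3_4 : Disjoint Sg3 Sg4 := by
  rw [Sg3, Sg4, Set.disjoint_left]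
  rintro p ⟨t, ⟨ht0, ht1⟩, rfl⟩ ⟨s, ⟨hs0, hs1⟩, hq⟩
  have e0 := congrArg (fun x : Pt => x 0) hq
  have e1 := congrArg (fun x : Pt => x 1) hq
  simp only [lineMap_coord, pt_zero, pt_one] at e0 e1
  linarith

lemma dj3_5 : Disjoint Sg3 Sg5 := by
  rw [Sg3, Sg5, Set.disjoint_left]
  rintro p ⟨t, ⟨ht0, ht1⟩, rfl⟩ ⟨s, ⟨hs0, hs1⟩, hq⟩
  have e0 := congrArg (fun x : Pt => x 0) hq
  have e1 := congrArg (fun x : Pt => x 1) hq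
  simp only [lineMap_coord, pt_zero, pt_one] at e0 e1
  linarith

lemma dj3_6 : Disjoint Sg3 Sg6 := by
  rw [Sg3, Sg6, Set.disjoint_left]
  rintro p ⟨t, ⟨ht0, ht1⟩, rfl⟩ ⟨s, ⟨hs0, hs1⟩, hq⟩
  have e0 := congrArg (fun x : Pt => x 0) hq
  have e1 := congrArg (fun x : Pt => x 1) hq
  simp only [lineMap_coord, pt_zero, pt_one] at e0 e1
  linarith

lemma dj3_7 : Disjoint Sg3 Sg7 := by
  rw [Sg3, Sg7, Set.disjoint_left]
  rintro p ⟨t, ⟨ht0, ht1⟩, rfl⟩ ⟨s, ⟨hs0, hs1⟩, hq⟩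
  have e0 := congrArg (fun x : Pt => x 0) hq
  have e1 := congrArg (fun x : Pt => x 1) hq
  simp only [lineMap_coord, pt_zero, pt_one] at e0 e1
  linarith

lemma dj3_8 : Disjoint Sg3 Sg8 := by
  rw [Sg3, Sg8, Set.disjoint_left]
  rintro p ⟨t, ⟨ht0, ht1⟩, rfl⟩ ⟨s, ⟨hs0, hs1⟩, hq⟩
  have e0 := congrArg (fun x : Pt => x 0) hq
  have e1 := congrArg (fun x : Pt => x 1) hq
  simp only [lineMap_coord, pt_zero, pt_one] at e0 e1
  linarith

lemma dj3_9 : Disjoint Sg3 Sg9 := by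
  rw [Sg3, Sg9, Set.disjoint_left]
  rintro p ⟨t, ⟨ht0, ht1⟩, rfl⟩ ⟨s, ⟨hs0, hs1⟩, hq⟩
  have e0 := congrArg (fun x : Pt => x 0) hq
  have e1 := congrArg (fun x : Pt => x 1) hq
  simp only [lineMap_coord, pt_zero, pt_one] at e0 e1
  linarith

lemma dj3_10 : Disjoint Sg3 Sg10 := by
  rw [Sg3, Sg10, Set.disjoint_left]
  rintro p ⟨t, ⟨ht0, ht1⟩, rfl⟩ ⟨s, ⟨hs0, hs1⟩, hq⟩
  have e0 := congrArg (fun x : Pt => x 0) hq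
  have e1 := congrArg (fun x : Pt => x 1) hq
  simp only [lineMap_coord, pt_zero, pt_one] at e0 e1
  linarith

lemma dj3_11 : Disjoint Sg3 Sg11 := by
  rw [Sg3, Sg11, Set.disjoint_left]
  rintro p ⟨t, ⟨ht0, ht1⟩, rfl⟩ ⟨s, ⟨hs0, hs1⟩, hq⟩
  have e0 := congrArg (fun x : Pt => x 0) hq
  have e1 := congrArg (fun x : Pt => x 1) hq
  simp only [lineMap_coord, pt_zero, pt_one] at e0 e1
  linarith

lemma dj4_5 : Disjoint Sg4 Sg5 := by
  rw [Sg4, Sg5, Set.disjoint_left]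
  rintro p ⟨t, ⟨ht0, ht1⟩, rfl⟩ ⟨s, ⟨hs0, hs1⟩, hq⟩
  have e0 := congrArg (fun x : Pt => x 0) hq
  have e1 := congrArg (fun x : Pt => x 1) hq
  simp only [lineMap_coord, pt_zero, pt_one] at e0 e1
  linarith

lemma dj4_6 : Disjoint Sg4 Sg6 := by
  rw [Sg4, Sg6, Set.disjoint_left]
  rintro p ⟨t, ⟨ht0, ht1⟩, rfl⟩ ⟨s, ⟨hs0, hs1⟩, hq⟩
  have e0 := congrArg (fun x : Pt => x 0) hq
  have e1 := congrArg (fun x : Pt => x 1) hq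
  simp only [lineMap_coord, pt_zero, pt_one] at e0 e1
  linarith

lemma dj4_7 : Disjoint Sg4 Sg7 := by
  rw [Sg4, Sg7, Set.disjoint_left]
  rintro p ⟨t, ⟨ht0, ht1⟩, rfl⟩ ⟨s, ⟨hs0, hs1⟩, hq⟩
  have e0 := congrArg (fun x : Pt => x 0) hq
  have e1 := congrArg (fun x : Pt => x 1) hq
  simp only [lineMap_coord, pt_zero, pt_one] at e0 e1
  linarith

lemma dj4_8 : Disjoint Sg4 Sg8 := by
  rw [Sg4, Sg8, Set.disjoint_left]
  rintro p ⟨t, ⟨ht0, ht1⟩, rfl⟩ ⟨s, ⟨hs0, hs1⟩, hq⟩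
  have e0 := congrArg (fun x : Pt => x 0) hq
  have e1 := congrArg (fun x : Pt => x 1) hq
  simp only [lineMap_coord, pt_zero, pt_one] at e0 e1
  linarith

lemma dj4_9 : Disjoint Sg4 Sg9 := by
  rw [Sg4, Sg9, Set.disjoint_left]
  rintro p ⟨t, ⟨ht0, ht1⟩, rfl⟩ ⟨s, ⟨hs0, hs1⟩, hq⟩
  have e0 := congrArg (fun x : Pt => x 0) hq
  have e1 := congrArg (fun x : Pt => x 1) hq
  simp only [lineMap_coord, pt_zero, pt_one] at e0 e1
  linarith

lemma dj4_10 : Disjoint Sg4 Sg10 := by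
  rw [Sg4, Sg10, Set.disjoint_left]
  rintro p ⟨t, ⟨ht0, ht1⟩, rfl⟩ ⟨s, ⟨hs0, hs1⟩, hq⟩
  have e0 := congrArg (fun x : Pt => x 0) hq
  have e1 := congrArg (fun x : Pt => x 1) hq
  simp only [lineMap_coord, pt_zero, pt_one] at e0 e1
  linarith

lemma dj4_11 : Disjoint Sg4 Sg11 := by
  rw [Sg4, Sg11, Set.disjoint_left]
  rintro p ⟨t, ⟨ht0, ht1⟩, rfl⟩ ⟨s, ⟨hs0, hs1⟩, hq⟩
  have e0 := congrArg (fun x : Pt => x 0) hq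
  have e1 := congrArg (fun x : Pt => x 1) hq
  simp only [lineMap_coord, pt_zero, pt_one] at e0 e1
  linarith

lemma dj5_6 : Disjoint Sg5 Sg6 := by
  rw [Sg5, Sg6, Set.disjoint_left]
  rintro p ⟨t, ⟨ht0, ht1⟩, rfl⟩ ⟨s, ⟨hs0, hs1⟩, hq⟩
  have e0 := congrArg (fun x : Pt => x 0) hq
  have e1 := congrArg (fun x : Pt => x 1) hq
  simp only [lineMap_coord, pt_zero, pt_one] at e0 e1
  linarith

lemma dj5_7 : Disjoint Sg5 Sg7 := by
  rw [Sg5, Sg7, Set.disjoint_left]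
  rintro p ⟨t, ⟨ht0, ht1⟩, rfl⟩ ⟨s, ⟨hs0, hs1⟩, hq⟩
  have e0 := congrArg (fun x : Pt => x 0) hq
  have e1 := congrArg (fun x : Pt => x 1) hq
  simp only [lineMap_coord, pt_zero, pt_one] at e0 e1
  linarith

lemma dj5_8 : Disjoint Sg5 Sg8 := by
  rw [Sg5, Sg8, Set.disjoint_left]
  rintro p ⟨t, ⟨ht0, ht1⟩, rfl⟩ ⟨s, ⟨hs0, hs1⟩, hq⟩
  have e0 := congrArg (fun x : Pt => x 0) hq
  have e1 := congrArg (fun x : Pt => x 1) hq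
  simp only [lineMap_coord, pt_zero, pt_one] at e0 e1
  linarith

lemma dj5_9 : Disjoint Sg5 Sg9 := by
  rw [Sg5, Sg9, Set.disjoint_left]
  rintro p ⟨t, ⟨ht0, ht1⟩, rfl⟩ ⟨s, ⟨hs0, hs1⟩, hq⟩
  have e0 := congrArg (fun x : Pt => x 0) hq
  have e1 := congrArg (fun x : Pt => x 1) hq
  simp only [lineMap_coord, pt_zero, pt_one] at e0 e1
  linarith

lemma dj5_10 : Disjoint Sg5 Sg10 := by
  rw [Sg5, Sg10, Set.disjoint_left]
  rintro p ⟨t, ⟨ht0, ht1⟩, rfl⟩ ⟨s, ⟨hs0, hs1⟩, hq⟩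
  have e0 := congrArg (fun x : Pt => x 0) hq
  have e1 := congrArg (fun x : Pt => x 1) hq
  simp only [lineMap_coord, pt_zero, pt_one] at e0 e1
  linarith

lemma dj5_11 : Disjoint Sg5 Sg11 := by
  rw [Sg5, Sg11, Set.disjoint_left]
  rintro p ⟨t, ⟨ht0, ht1⟩, rfl⟩ ⟨s, ⟨hs0, hs1⟩, hq⟩
  have e0 := congrArg (fun x : Pt => x 0) hq
  have e1 := congrArg (fun x : Pt => x 1) hq
  simp only [lineMap_coord, pt_zero, pt_one] at e0 e1
  linarith

lemma dj6_7 : Disjoint Sg6 Sg7 := by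
  rw [Sg6, Sg7, Set.disjoint_left]
  rintro p ⟨t, ⟨ht0, ht1⟩, rfl⟩ ⟨s, ⟨hs0, hs1⟩, hq⟩
  have e0 := congrArg (fun x : Pt => x 0) hq
  have e1 := congrArg (fun x : Pt => x 1) hq
  simp only [lineMap_coord, pt_zero, pt_one] at e0 e1
  linarith

lemma dj6_8 : Disjoint Sg6 Sg8 := by
  rw [Sg6, Sg8, Set.disjoint_left]
  rintro p ⟨t, ⟨ht0, ht1⟩, rfl⟩ ⟨s, ⟨hs0, hs1⟩, hq⟩
  have e0 := congrArg (fun x : Pt => x 0) hq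
  have e1 := congrArg (fun x : Pt => x 1) hq
  simp only [lineMap_coord, pt_zero, pt_one] at e0 e1
  linarith

lemma dj6_9 : Disjoint Sg6 Sg9 := by
  rw [Sg6, Sg9, Set.disjoint_left]
  rintro p ⟨t, ⟨ht0, ht1⟩, rfl⟩ ⟨s, ⟨hs0, hs1⟩, hq⟩
  have e0 := congrArg (fun x : Pt => x 0) hq
  have e1 := congrArg (fun x : Pt => x 1) hq
  simp only [lineMap_coord, pt_zero, pt_one] at e0 e1
  linarith

lemma dj6_10 : Disjoint Sg6 Sg10 := by
  rw [Sg6, Sg10, Set.disjoint_left]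
  rintro p ⟨t, ⟨ht0, ht1⟩, rfl⟩ ⟨s, ⟨hs0, hs1⟩, hq⟩
  have e0 := congrArg (fun x : Pt => x 0) hq
  have e1 := congrArg (fun x : Pt => x 1) hq
  simp only [lineMap_coord, pt_zero, pt_one] at e0 e1
  linarith

lemma dj6_11 : Disjoint Sg6 Sg11 := by
  rw [Sg6, Sg11, Set.disjoint_left]
  rintro p ⟨t, ⟨ht0, ht1⟩, rfl⟩ ⟨s, ⟨hs0, hs1⟩, hq⟩
  have e0 := congrArg (fun x : Pt => x 0) hq
  have e1 := congrArg (fun x : Pt => x 1) hq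
  simp only [lineMap_coord, pt_zero, pt_one] at e0 e1
  linarith

lemma dj7_8 : Disjoint Sg7 Sg8 := by
  rw [Sg7, Sg8, Set.disjoint_left]
  rintro p ⟨t, ⟨ht0, ht1⟩, rfl⟩ ⟨s, ⟨hs0, hs1⟩, hq⟩
  have e0 := congrArg (fun x : Pt => x 0) hq
  have e1 := congrArg (fun x : Pt => x 1) hq
  simp only [lineMap_coord, pt_zero, pt_one] at e0 e1
  linarith

lemma dj7_9 : Disjoint Sg7 Sg9 := by
  rw [Sg7, Sg9, Set.disjoint_left]
  rintro p ⟨t, ⟨ht0, ht1⟩, rfl⟩ ⟨s, ⟨hs0, hs1⟩, hq⟩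
  have e0 := congrArg (fun x : Pt => x 0) hq
  have e1 := congrArg (fun x : Pt => x 1) hq
  simp only [lineMap_coord, pt_zero, pt_one] at e0 e1
  linarith

lemma dj7_10 : Disjoint Sg7 Sg10 := by
  rw [Sg7, Sg10, Set.disjoint_left]
  rintro p ⟨t, ⟨ht0, ht1⟩, rfl⟩ ⟨s, ⟨hs0, hs1⟩, hq⟩
  have e0 := congrArg (fun x : Pt => x 0) hq
  have e1 := congrArg (fun x : Pt => x 1) hq
  simp only [lineMap_coord, pt_zero, pt_one] at e0 e1
  linarith

lemma dj7_11 : Disjoint Sg7 Sg11 := by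
  rw [Sg7, Sg11, Set.disjoint_left]
  rintro p ⟨t, ⟨ht0, ht1⟩, rfl⟩ ⟨s, ⟨hs0, hs1⟩, hq⟩
  have e0 := congrArg (fun x : Pt => x 0) hq
  have e1 := congrArg (fun x : Pt => x 1) hq
  simp only [lineMap_coord, pt_zero, pt_one] at e0 e1
  linarith

lemma dj8_9 : Disjoint Sg8 Sg9 := by
  rw [Sg8, Sg9, Set.disjoint_left]
  rintro p ⟨t, ⟨ht0, ht1⟩, rfl⟩ ⟨s, ⟨hs0, hs1⟩, hq⟩
  have e0 := congrArg (fun x : Pt => x 0) hq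
  have e1 := congrArg (fun x : Pt => x 1) hq
  simp only [lineMap_coord, pt_zero, pt_one] at e0 e1
  linarith

lemma dj8_10 : Disjoint Sg8 Sg10 := by
  rw [Sg8, Sg10, Set.disjoint_left]
  rintro p ⟨t, ⟨ht0, ht1⟩, rfl⟩ ⟨s, ⟨hs0, hs1⟩, hq⟩
  have e0 := congrArg (fun x : Pt => x 0) hq
  have e1 := congrArg (fun x : Pt => x 1) hq
  simp only [lineMap_coord, pt_zero, pt_one] at e0 e1
  linarith

lemma dj8_11 : Disjoint Sg8 Sg11 := by
  rw [Sg8, Sg11, Set.disjoint_left]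
  rintro p ⟨t, ⟨ht0, ht1⟩, rfl⟩ ⟨s, ⟨hs0, hs1⟩, hq⟩
  have e0 := congrArg (fun x : Pt => x 0) hq
  have e1 := congrArg (fun x : Pt => x 1) hq
  simp only [lineMap_coord, pt_zero, pt_one] at e0 e1
  linarith

lemma dj9_10 : Disjoint Sg9 Sg10 := by
  rw [Sg9, Sg10, Set.disjoint_left]
  rintro p ⟨t, ⟨ht0, ht1⟩, rfl⟩ ⟨s, ⟨hs0, hs1⟩, hq⟩
  have e0 := congrArg (fun x : Pt => x 0) hq
  have e1 := congrArg (fun x : Pt => x 1) hq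
  simp only [lineMap_coord, pt_zero, pt_one] at e0 e1
  linarith

lemma dj9_11 : Disjoint Sg9 Sg11 := by
  rw [Sg9, Sg11, Set.disjoint_left]
  rintro p ⟨t, ⟨ht0, ht1⟩, rfl⟩ ⟨s, ⟨hs0, hs1⟩, hq⟩
  have e0 := congrArg (fun x : Pt => x 0) hq
  have e1 := congrArg (fun x : Pt => x 1) hq
  simp only [lineMap_coord, pt_zero, pt_one] at e0 e1
  linarith

lemma dj10_11 : Disjoint Sg10 Sg11 := by
  rw [Sg10, Sg11, Set.disjoint_left]
  rintro p ⟨t, ⟨ht0, ht1⟩, rfl⟩ ⟨s, ⟨hs0, hs1⟩, hq⟩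
  have e0 := congrArg (fun x : Pt => x 0) hq
  have e1 := congrArg (fun x : Pt => x 1) hq
  simp only [lineMap_coord, pt_zero, pt_one] at e0 e1
  linarith

def U12 : Set Pt := Sg0 ∪ (Sg1 ∪ (Sg2 ∪ (Sg3 ∪ (Sg4 ∪ (Sg5 ∪ (Sg6 ∪ (Sg7 ∪ (Sg8 ∪ (Sg9 ∪ (Sg10 ∪ (Sg11)))))))))))

lemma mbT11 : MeasurableSet (Sg11) := mb11
lemma mbT10 : MeasurableSet (Sg10 ∪ (Sg11)) := mb10.union mbT11
lemma mbT9 : MeasurableSet (Sg9 ∪ (Sg10 ∪ (Sg11))) := mb9.union mbT10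
lemma mbT8 : MeasurableSet (Sg8 ∪ (Sg9 ∪ (Sg10 ∪ (Sg11)))) := mb8.union mbT9
lemma mbT7 : MeasurableSet (Sg7 ∪ (Sg8 ∪ (Sg9 ∪ (Sg10 ∪ (Sg11))))) := mb7.union mbT8
lemma mbT6 : MeasurableSet (Sg6 ∪ (Sg7 ∪ (Sg8 ∪ (Sg9 ∪ (Sg10 ∪ (Sg11)))))) := mb6.union mbT7
lemma mbT5 : MeasurableSet (Sg5 ∪ (Sg6 ∪ (Sg7 ∪ (Sg8 ∪ (Sg9 ∪ (Sg10 ∪ (Sg11))))))) := mb5.union mbT6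
lemma mbT4 : MeasurableSet (Sg4 ∪ (Sg5 ∪ (Sg6 ∪ (Sg7 ∪ (Sg8 ∪ (Sg9 ∪ (Sg10 ∪ (Sg11)))))))) := mb4.union mbT5
lemma mbT3 : MeasurableSet (Sg3 ∪ (Sg4 ∪ (Sg5 ∪ (Sg6 ∪ (Sg7 ∪ (Sg8 ∪ (Sg9 ∪ (Sg10 ∪ (Sg11))))))))) := mb3.union mbT4
lemma mbT2 : MeasurableSet (Sg2 ∪ (Sg3 ∪ (Sg4 ∪ (Sg5 ∪ (Sg6 ∪ (Sg7 ∪ (Sg8 ∪ (Sg9 ∪ (Sg10 ∪ (Sg11)))))))))) := mb2.union mbT3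
lemma mbT1 : MeasurableSet (Sg1 ∪ (Sg2 ∪ (Sg3 ∪ (Sg4 ∪ (Sg5 ∪ (Sg6 ∪ (Sg7 ∪ (Sg8 ∪ (Sg9 ∪ (Sg10 ∪ (Sg11))))))))))) := mb1.union mbT2

lemma djT0_11 : Disjoint Sg0 (Sg11) := dj0_11
lemma djT0_10 : Disjoint Sg0 (Sg10 ∪ (Sg11)) :=
  Set.disjoint_union_right.2 ⟨dj0_10, djT0_11⟩
lemma djT0_9 : Disjoint Sg0 (Sg9 ∪ (Sg10 ∪ (Sg11))) :=
  Set.disjoint_union_right.2 ⟨dj0_9, djT0_10⟩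
lemma djT0_8 : Disjoint Sg0 (Sg8 ∪ (Sg9 ∪ (Sg10 ∪ (Sg11)))) :=
  Set.disjoint_union_right.2 ⟨dj0_8, djT0_9⟩
lemma djT0_7 : Disjoint Sg0 (Sg7 ∪ (Sg8 ∪ (Sg9 ∪ (Sg10 ∪ (Sg11))))) :=
  Set.disjoint_union_right.2 ⟨dj0_7, djT0_8⟩
lemma djT0_6 : Disjoint Sg0 (Sg6 ∪ (Sg7 ∪ (Sg8 ∪ (Sg9 ∪ (Sg10 ∪ (Sg11)))))) :=
  Set.disjoint_union_right.2 ⟨dj0_6, djT0_7⟩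
lemma djT0_5 : Disjoint Sg0 (Sg5 ∪ (Sg6 ∪ (Sg7 ∪ (Sg8 ∪ (Sg9 ∪ (Sg10 ∪ (Sg11))))))) :=
  Set.disjoint_union_right.2 ⟨dj0_5, djT0_6⟩
lemma djT0_4 : Disjoint Sg0 (Sg4 ∪ (Sg5 ∪ (Sg6 ∪ (Sg7 ∪ (Sg8 ∪ (Sg9 ∪ (Sg10 ∪ (Sg11)))))))) :=
  Set.disjoint_union_right.2 ⟨dj0_4, djT0_5⟩
lemma djT0_3 : Disjoint Sg0 (Sg3 ∪ (Sg4 ∪ (Sg5 ∪ (Sg6 ∪ (Sg7 ∪ (Sg8 ∪ (Sg9 ∪ (Sg10 ∪ (Sg11))))))))) :=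
  Set.disjoint_union_right.2 ⟨dj0_3, djT0_4⟩
lemma djT0_2 : Disjoint Sg0 (Sg2 ∪ (Sg3 ∪ (Sg4 ∪ (Sg5 ∪ (Sg6 ∪ (Sg7 ∪ (Sg8 ∪ (Sg9 ∪ (Sg10 ∪ (Sg11)))))))))) :=
  Set.disjoint_union_right.2 ⟨dj0_2, djT0_3⟩
lemma djT0_1 : Disjoint Sg0 (Sg1 ∪ (Sg2 ∪ (Sg3 ∪ (Sg4 ∪ (Sg5 ∪ (Sg6 ∪ (Sg7 ∪ (Sg8 ∪ (Sg9 ∪ (Sg10 ∪ (Sg11))))))))))) :=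
  Set.disjoint_union_right.2 ⟨dj0_1, djT0_2⟩
lemma djT1_11 : Disjoint Sg1 (Sg11) := dj1_11
lemma djT1_10 : Disjoint Sg1 (Sg10 ∪ (Sg11)) :=
  Set.disjoint_union_right.2 ⟨dj1_10, djT1_11⟩
lemma djT1_9 : Disjoint Sg1 (Sg9 ∪ (Sg10 ∪ (Sg11))) :=
  Set.disjoint_union_right.2 ⟨dj1_9, djT1_10⟩
lemma djT1_8 : Disjoint Sg1 (Sg8 ∪ (Sg9 ∪ (Sg10 ∪ (Sg11)))) :=
  Set.disjoint_union_right.2 ⟨dj1_8, djT1_9⟩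
lemma djT1_7 : Disjoint Sg1 (Sg7 ∪ (Sg8 ∪ (Sg9 ∪ (Sg10 ∪ (Sg11))))) :=
  Set.disjoint_union_right.2 ⟨dj1_7, djT1_8⟩
lemma djT1_6 : Disjoint Sg1 (Sg6 ∪ (Sg7 ∪ (Sg8 ∪ (Sg9 ∪ (Sg10 ∪ (Sg11)))))) :=
  Set.disjoint_union_right.2 ⟨dj1_6, djT1_7⟩
lemma djT1_5 : Disjoint Sg1 (Sg5 ∪ (Sg6 ∪ (Sg7 ∪ (Sg8 ∪ (Sg9 ∪ (Sg10 ∪ (Sg11))))))) :=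
  Set.disjoint_union_right.2 ⟨dj1_5, djT1_6⟩
lemma djT1_4 : Disjoint Sg1 (Sg4 ∪ (Sg5 ∪ (Sg6 ∪ (Sg7 ∪ (Sg8 ∪ (Sg9 ∪ (Sg10 ∪ (Sg11)))))))) :=
  Set.disjoint_union_right.2 ⟨dj1_4, djT1_5⟩
lemma djT1_3 : Disjoint Sg1 (Sg3 ∪ (Sg4 ∪ (Sg5 ∪ (Sg6 ∪ (Sg7 ∪ (Sg8 ∪ (Sg9 ∪ (Sg10 ∪ (Sg11))))))))) :=
  Set.disjoint_union_right.2 ⟨dj1_3, djT1_4⟩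
lemma djT1_2 : Disjoint Sg1 (Sg2 ∪ (Sg3 ∪ (Sg4 ∪ (Sg5 ∪ (Sg6 ∪ (Sg7 ∪ (Sg8 ∪ (Sg9 ∪ (Sg10 ∪ (Sg11)))))))))) :=
  Set.disjoint_union_right.2 ⟨dj1_2, djT1_3⟩
lemma djT2_11 : Disjoint Sg2 (Sg11) := dj2_11
lemma djT2_10 : Disjoint Sg2 (Sg10 ∪ (Sg11)) :=
  Set.disjoint_union_right.2 ⟨dj2_10, djT2_11⟩
lemma djT2_9 : Disjoint Sg2 (Sg9 ∪ (Sg10 ∪ (Sg11))) :=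
  Set.disjoint_union_right.2 ⟨dj2_9, djT2_10⟩
lemma djT2_8 : Disjoint Sg2 (Sg8 ∪ (Sg9 ∪ (Sg10 ∪ (Sg11)))) :=
  Set.disjoint_union_right.2 ⟨dj2_8, djT2_9⟩
lemma djT2_7 : Disjoint Sg2 (Sg7 ∪ (Sg8 ∪ (Sg9 ∪ (Sg10 ∪ (Sg11))))) :=
  Set.disjoint_union_right.2 ⟨dj2_7, djT2_8⟩
lemma djT2_6 : Disjoint Sg2 (Sg6 ∪ (Sg7 ∪ (Sg8 ∪ (Sg9 ∪ (Sg10 ∪ (Sg11)))))) :=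
  Set.disjoint_union_right.2 ⟨dj2_6, djT2_7⟩
lemma djT2_5 : Disjoint Sg2 (Sg5 ∪ (Sg6 ∪ (Sg7 ∪ (Sg8 ∪ (Sg9 ∪ (Sg10 ∪ (Sg11))))))) :=
  Set.disjoint_union_right.2 ⟨dj2_5, djT2_6⟩
lemma djT2_4 : Disjoint Sg2 (Sg4 ∪ (Sg5 ∪ (Sg6 ∪ (Sg7 ∪ (Sg8 ∪ (Sg9 ∪ (Sg10 ∪ (Sg11)))))))) :=
  Set.disjoint_union_right.2 ⟨dj2_4, djT2_5⟩
lemma djT2_3 : Disjoint Sg2 (Sg3 ∪ (Sg4 ∪ (Sg5 ∪ (Sg6 ∪ (Sg7 ∪ (Sg8 ∪ (Sg9 ∪ (Sg10 ∪ (Sg11))))))))) :=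
  Set.disjoint_union_right.2 ⟨dj2_3, djT2_4⟩
lemma djT3_11 : Disjoint Sg3 (Sg11) := dj3_11
lemma djT3_10 : Disjoint Sg3 (Sg10 ∪ (Sg11)) :=
  Set.disjoint_union_right.2 ⟨dj3_10, djT3_11⟩
lemma djT3_9 : Disjoint Sg3 (Sg9 ∪ (Sg10 ∪ (Sg11))) :=
  Set.disjoint_union_right.2 ⟨dj3_9, djT3_10⟩
lemma djT3_8 : Disjoint Sg3 (Sg8 ∪ (Sg9 ∪ (Sg10 ∪ (Sg11)))) :=
  Set.disjoint_union_right.2 ⟨dj3_8, djT3_9⟩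
lemma djT3_7 : Disjoint Sg3 (Sg7 ∪ (Sg8 ∪ (Sg9 ∪ (Sg10 ∪ (Sg11))))) :=
  Set.disjoint_union_right.2 ⟨dj3_7, djT3_8⟩
lemma djT3_6 : Disjoint Sg3 (Sg6 ∪ (Sg7 ∪ (Sg8 ∪ (Sg9 ∪ (Sg10 ∪ (Sg11)))))) :=
  Set.disjoint_union_right.2 ⟨dj3_6, djT3_7⟩
lemma djT3_5 : Disjoint Sg3 (Sg5 ∪ (Sg6 ∪ (Sg7 ∪ (Sg8 ∪ (Sg9 ∪ (Sg10 ∪ (Sg11))))))) :=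
  Set.disjoint_union_right.2 ⟨dj3_5, djT3_6⟩
lemma djT3_4 : Disjoint Sg3 (Sg4 ∪ (Sg5 ∪ (Sg6 ∪ (Sg7 ∪ (Sg8 ∪ (Sg9 ∪ (Sg10 ∪ (Sg11)))))))) :=
  Set.disjoint_union_right.2 ⟨dj3_4, djT3_5⟩
lemma djT4_11 : Disjoint Sg4 (Sg11) := dj4_11
lemma djT4_10 : Disjoint Sg4 (Sg10 ∪ (Sg11)) :=
  Set.disjoint_union_right.2 ⟨dj4_10, djT4_11⟩
lemma djT4_9 : Disjoint Sg4 (Sg9 ∪ (Sg10 ∪ (Sg11))) :=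
  Set.disjoint_union_right.2 ⟨dj4_9, djT4_10⟩
lemma djT4_8 : Disjoint Sg4 (Sg8 ∪ (Sg9 ∪ (Sg10 ∪ (Sg11)))) :=
  Set.disjoint_union_right.2 ⟨dj4_8, djT4_9⟩
lemma djT4_7 : Disjoint Sg4 (Sg7 ∪ (Sg8 ∪ (Sg9 ∪ (Sg10 ∪ (Sg11))))) :=
  Set.disjoint_union_right.2 ⟨dj4_7, djT4_8⟩
lemma djT4_6 : Disjoint Sg4 (Sg6 ∪ (Sg7 ∪ (Sg8 ∪ (Sg9 ∪ (Sg10 ∪ (Sg11)))))) :=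
  Set.disjoint_union_right.2 ⟨dj4_6, djT4_7⟩
lemma djT4_5 : Disjoint Sg4 (Sg5 ∪ (Sg6 ∪ (Sg7 ∪ (Sg8 ∪ (Sg9 ∪ (Sg10 ∪ (Sg11))))))) :=
  Set.disjoint_union_right.2 ⟨dj4_5, djT4_6⟩
lemma djT5_11 : Disjoint Sg5 (Sg11) := dj5_11
lemma djT5_10 : Disjoint Sg5 (Sg10 ∪ (Sg11)) :=
  Set.disjoint_union_right.2 ⟨dj5_10, djT5_11⟩
lemma djT5_9 : Disjoint Sg5 (Sg9 ∪ (Sg10 ∪ (Sg11))) :=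
  Set.disjoint_union_right.2 ⟨dj5_9, djT5_10⟩
lemma djT5_8 : Disjoint Sg5 (Sg8 ∪ (Sg9 ∪ (Sg10 ∪ (Sg11)))) :=
  Set.disjoint_union_right.2 ⟨dj5_8, djT5_9⟩
lemma djT5_7 : Disjoint Sg5 (Sg7 ∪ (Sg8 ∪ (Sg9 ∪ (Sg10 ∪ (Sg11))))) :=
  Set.disjoint_union_right.2 ⟨dj5_7, djT5_8⟩
lemma djT5_6 : Disjoint Sg5 (Sg6 ∪ (Sg7 ∪ (Sg8 ∪ (Sg9 ∪ (Sg10 ∪ (Sg11)))))) :=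
  Set.disjoint_union_right.2 ⟨dj5_6, djT5_7⟩
lemma djT6_11 : Disjoint Sg6 (Sg11) := dj6_11
lemma djT6_10 : Disjoint Sg6 (Sg10 ∪ (Sg11)) :=
  Set.disjoint_union_right.2 ⟨dj6_10, djT6_11⟩
lemma djT6_9 : Disjoint Sg6 (Sg9 ∪ (Sg10 ∪ (Sg11))) :=
  Set.disjoint_union_right.2 ⟨dj6_9, djT6_10⟩
lemma djT6_8 : Disjoint Sg6 (Sg8 ∪ (Sg9 ∪ (Sg10 ∪ (Sg11)))) :=
  Set.disjoint_union_right.2 ⟨dj6_8, djT6_9⟩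
lemma djT6_7 : Disjoint Sg6 (Sg7 ∪ (Sg8 ∪ (Sg9 ∪ (Sg10 ∪ (Sg11))))) :=
  Set.disjoint_union_right.2 ⟨dj6_7, djT6_8⟩
lemma djT7_11 : Disjoint Sg7 (Sg11) := dj7_11
lemma djT7_10 : Disjoint Sg7 (Sg10 ∪ (Sg11)) :=
  Set.disjoint_union_right.2 ⟨dj7_10, djT7_11⟩
lemma djT7_9 : Disjoint Sg7 (Sg9 ∪ (Sg10 ∪ (Sg11))) :=
  Set.disjoint_union_right.2 ⟨dj7_9, djT7_10⟩
lemma djT7_8 : Disjoint Sg7 (Sg8 ∪ (Sg9 ∪ (Sg10 ∪ (Sg11)))) :=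
  Set.disjoint_union_right.2 ⟨dj7_8, djT7_9⟩
lemma djT8_11 : Disjoint Sg8 (Sg11) := dj8_11
lemma djT8_10 : Disjoint Sg8 (Sg10 ∪ (Sg11)) :=
  Set.disjoint_union_right.2 ⟨dj8_10, djT8_11⟩
lemma djT8_9 : Disjoint Sg8 (Sg9 ∪ (Sg10 ∪ (Sg11))) :=
  Set.disjoint_union_right.2 ⟨dj8_9, djT8_10⟩
lemma djT9_11 : Disjoint Sg9 (Sg11) := dj9_11
lemma djT9_10 : Disjoint Sg9 (Sg10 ∪ (Sg11)) :=
  Set.disjoint_union_right.2 ⟨dj9_10, djT9_11⟩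
lemma djT10_11 : Disjoint Sg10 (Sg11) := dj10_11

lemma mU12 : μH[1] U12 = ENNReal.ofReal ((24:ℝ)) + ENNReal.ofReal ((2:ℝ)) + ENNReal.ofReal (Real.sqrt 68) + ENNReal.ofReal ((8:ℝ)) + ENNReal.ofReal ((2:ℝ)) + ENNReal.ofReal (Real.sqrt 612) + ENNReal.ofReal ((24:ℝ)) + ENNReal.ofReal ((2:ℝ)) + ENNReal.ofReal (Real.sqrt 68) + ENNReal.ofReal ((8:ℝ)) + ENNReal.ofReal ((2:ℝ)) + ENNReal.ofReal (Real.sqrt 612) := by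
  rw [U12, measure_union djT0_1 mbT1, measure_union djT1_2 mbT2, measure_union djT2_3 mbT3, measure_union djT3_4 mbT4, measure_union djT4_5 mbT5, measure_union djT5_6 mbT6, measure_union djT6_7 mbT7, measure_union djT7_8 mbT8, measure_union djT8_9 mbT9, measure_union djT9_10 mbT10, measure_union djT10_11 mbT11, ms0, ms1, ms2, ms3, ms4, ms5, ms6, ms7, ms8, ms9, ms10, ms11]
  ring

lemma U12_subset : U12 ⊆ frontier (E1 ∪ E2) := by
  rw [U12]
  refine union_subset segf0 (union_subset segf1 (union_subset segf2 (union_subset segf3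
    (union_subset segf4 (union_subset segf5 (union_subset segf6 (union_subset segf7
    (union_subset segf8 (union_subset segf9 (union_subset segf10 segf11))))))))))

lemma frontier_union_lower :
    ENNReal.ofReal (72 + 2 * Real.sqrt 68 + 2 * Real.sqrt 612) ≤ μH[1] (frontier (E1 ∪ E2)) := by
  refine le_trans (le_of_eq ?_) (le_trans (le_of_eq mU12.symm) (measure_mono U12_subset))
  rw [← ENNReal.ofReal_add (by positivity) (by positivity),
    ← ENNReal.ofReal_add (by positivity) (by positivity),
    ← ENNReal.ofReal_add (by positivity) (by positivity),
    ← ENNReal.ofReal_add (by positivity) (by positivity),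
    ← ENNReal.ofReal_add (by positivity) (by positivity),
    ← ENNReal.ofReal_add (by positivity) (by positivity),
    ← ENNReal.ofReal_add (by positivity) (by positivity),
    ← ENNReal.ofReal_add (by positivity) (by positivity),
    ← ENNReal.ofReal_add (by positivity) (by positivity),
    ← ENNReal.ofReal_add (by positivity) (by positivity),
    ← ENNReal.ofReal_add (by positivity) (by positivity)]
  congr 1
  ring

/-! ### Frontier of E1 -/

def O1 : Set Pt := {p | 0 < p 1 ∧ p 0 < 40 ∧ 4 * p 1 < p 0}
def O2 : Set Pt := {p | p 1 < 8 ∧ 24 < p 0 ∧ p 0 - 32 < 4 * p 1}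

lemma O1_open : IsOpen O1 := by
  refine (isOpen_lt continuous_const (cont_coord 1)).inter
    ((isOpen_lt (cont_coord 0) continuous_const).inter
      (isOpen_lt (continuous_const.mul (cont_coord 1)) (cont_coord 0)))

lemma O2_open : IsOpen O2 := by
  refine (isOpen_lt (cont_coord 1) continuous_const).inter
    ((isOpen_lt continuous_const (cont_coord 0)).inter
      (isOpen_lt ((cont_coord 0).sub continuous_const) (continuous_const.mul (cont_coord 1))))

lemma O1_sub : O1 ⊆ E1 := fun p ⟨h1, h2, h3⟩ => ⟨le_of_lt h1, le_of_lt h2, le_of_lt h3⟩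
lemma O2_sub : O2 ⊆ E2 := fun p ⟨h1, h2, h3⟩ => ⟨le_of_lt h1, le_of_lt h2, le_of_lt h3⟩

lemma O1_sub_interior : O1 ⊆ interior E1 := interior_maximal O1_sub O1_open
lemma O2_sub_interior : O2 ⊆ interior E2 := interior_maximal O2_sub O2_open

lemma E1_closed : IsClosed E1 := by
  refine (isClosed_le continuous_const (cont_coord 1)).inter
    ((isClosed_le (cont_coord 0) continuous_const).inter
      (isClosed_le (continuous_const.mul (cont_coord 1)) (cont_coord 0)))

lemma E2_closed : IsClosed E2 := by
  refine (isClosed_le (cont_coord 1) continuous_const).inter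
    ((isClosed_le continuous_const (cont_coord 0)).inter
      (isClosed_le ((cont_coord 0).sub continuous_const) (continuous_const.mul (cont_coord 1))))

lemma E1_bounded : Bornology.IsBounded E1 := by
  refine (Metric.isBounded_closedBall (x := (0 : Pt)) (r := 50)).subset ?_
  intro p ⟨h1, h2, h3⟩
  rw [Metric.mem_closedBall, EuclideanSpace.dist_eq, Fin.sum_univ_two]
  have e : ∀ i : Fin 2, dist (p i) ((0 : Pt) i) = |p i| := by
    intro i
    simp [Real.dist_eq]
  rw [e 0, e 1, sq_abs, sq_abs]
  have h50 : Real.sqrt ((50:ℝ) ^ 2) = 50 := Real.sqrt_sq (by norm_num)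
  calc Real.sqrt (p 0 ^ 2 + p 1 ^ 2) ≤ Real.sqrt ((50:ℝ) ^ 2) := by
        apply Real.sqrt_le_sqrt
        nlinarith
    _ = 50 := h50

lemma E2_bounded : Bornology.IsBounded E2 := by
  refine (Metric.isBounded_closedBall (x := (0 : Pt)) (r := 100)).subset ?_
  intro p ⟨h1, h2, h3⟩
  rw [Metric.mem_closedBall, EuclideanSpace.dist_eq, Fin.sum_univ_two]
  have e : ∀ i : Fin 2, dist (p i) ((0 : Pt) i) = |p i| := by
    intro i
    simp [Real.dist_eq]
  rw [e 0, e 1, sq_abs, sq_abs]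
  have h100 : Real.sqrt ((100:ℝ) ^ 2) = 100 := Real.sqrt_sq (by norm_num)
  calc Real.sqrt (p 0 ^ 2 + p 1 ^ 2) ≤ Real.sqrt ((100:ℝ) ^ 2) := by
        apply Real.sqrt_le_sqrt
        nlinarith
    _ = 100 := h100

lemma E1_compact : IsCompact E1 := Metric.isCompact_of_isClosed_isBounded E1_closed E1_bounded
lemma E2_compact : IsCompact E2 := Metric.isCompact_of_isClosed_isBounded E2_closed E2_bounded

lemma comb_coord (a b : ℝ) (x y : Pt) (i : Fin 2) :
    (a • x + b • y : Pt) i = a * x i + b * y i := by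
  simp [PiLp.add_apply, PiLp.smul_apply, smul_eq_mul]

lemma E1_convex : Convex ℝ E1 := by
  rintro x ⟨hx1, hx2, hx3⟩ y ⟨hy1, hy2, hy3⟩ a b ha hb hab
  refine ⟨?_, ?_, ?_⟩ <;> simp only [comb_coord] <;> nlinarith

lemma E2_convex : Convex ℝ E2 := by
  rintro x ⟨hx1, hx2, hx3⟩ y ⟨hy1, hy2, hy3⟩ a b ha hb hab
  refine ⟨?_, ?_, ?_⟩ <;> simp only [comb_coord] <;> nlinarith

lemma E1_interior_nonempty : (interior E1).Nonempty :=
  ⟨pt 39 1, O1_sub_interior (by constructor <;> [norm_num; constructor <;> norm_num])⟩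

lemma E2_interior_nonempty : (interior E2).Nonempty :=
  ⟨pt 25 0, O2_sub_interior (by constructor <;> [norm_num; constructor <;> norm_num])⟩

lemma frontier_E1_subset : frontier E1 ⊆
    sg (pt 0 0) (pt 40 0) (Icc 0 1) ∪ sg (pt 40 0) (pt 40 10) (Icc 0 1) ∪
      sg (pt 0 0) (pt 40 10) (Icc 0 1) := by
  intro p hp
  have hpE : p ∈ E1 := by
    have := hp.1
    rwa [E1_closed.closure_eq] at this
  have hpO : p ∉ O1 := fun h => hp.2 (O1_sub_interior h)
  obtain ⟨h1, h2, h3⟩ := hpE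
  rcases eq_or_lt_of_le h1 with hb | hb
  · -- bottom edge: p 1 = 0
    left; left
    refine ⟨p 0 / 40, ⟨div_nonneg (by linarith) (by norm_num), by rw [div_le_one (by norm_num)]; linarith⟩, ?_⟩
    refine pt_ext ?_ ?_ <;> rw [lineMap_coord] <;> simp <;> linarith
  · rcases eq_or_lt_of_le h2 with hr | hr
    · -- right edge: p 0 = 40
      left; right
      refine ⟨p 1 / 10, ⟨div_nonneg (by linarith) (by norm_num), ?_⟩, ?_⟩
      · rw [div_le_one (by norm_num)]
        linarith
      · refine pt_ext ?_ ?_ <;> rw [lineMap_coord] <;> simp <;> linarith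
    · -- hypotenuse: 4 * p 1 = p 0
      have hh : 4 * p 1 = p 0 := by
        rcases eq_or_lt_of_le h3 with h | h
        · exact h
        · exact absurd ⟨hb, hr, h⟩ hpO
      right
      refine ⟨p 1 / 10, ⟨div_nonneg (by linarith) (by norm_num), ?_⟩, ?_⟩
      · rw [div_le_one (by norm_num)]
        linarith
      · refine pt_ext ?_ ?_ <;> rw [lineMap_coord] <;> simp <;> linarith

lemma frontier_E1_upper :
    μH[1] (frontier E1) ≤ ENNReal.ofReal (50 + Real.sqrt 1700) := by
  refine le_trans (measure_mono frontier_E1_subset) ?_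
  refine le_trans (measure_union_le _ _) ?_
  refine le_trans (add_le_add (measure_union_le _ _) le_rfl) ?_
  rw [sg_Icc_measure, sg_Icc_measure, sg_Icc_measure, edist_pt, edist_pt, edist_pt]
  rw [show ((0:ℝ) - 40) ^ 2 + ((0:ℝ) - 0) ^ 2 = (40:ℝ) ^ 2 by norm_num,
    Real.sqrt_sq (by norm_num : (0:ℝ) ≤ 40),
    show ((40:ℝ) - 40) ^ 2 + ((0:ℝ) - 10) ^ 2 = (10:ℝ) ^ 2 by norm_num,
    Real.sqrt_sq (by norm_num : (0:ℝ) ≤ 10),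
    show ((0:ℝ) - 40) ^ 2 + ((0:ℝ) - 10) ^ 2 = (1700:ℝ) by norm_num]
  rw [← ENNReal.ofReal_add (by norm_num) (by positivity),
    ← ENNReal.ofReal_add (by positivity) (by positivity)]
  apply ENNReal.ofReal_le_ofReal
  linarith

/-! ### E2 is congruent to E1 -/

def refl : Pt ≃ᵢ Pt := (AffineIsometryEquiv.pointReflection ℝ (pt 32 4)).toIsometryEquiv

lemma refl_coord (p : Pt) (i : Fin 2) : refl p i = 2 * (pt 32 4) i - p i := by
  show (AffineIsometryEquiv.pointReflection ℝ (pt 32 4)) p i = _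
  rw [AffineIsometryEquiv.pointReflection_apply]
  have : ((pt 32 4 -ᵥ p) +ᵥ pt 32 4 : Pt) i = (pt 32 4) i - p i + (pt 32 4) i := by
    simp [vsub_eq_sub, vadd_eq_add, PiLp.add_apply, PiLp.sub_apply]
  rw [this]; ring

lemma refl_invol (p : Pt) : refl (refl p) = p :=
  (AffineIsometryEquiv.pointReflection_involutive (𝕜 := ℝ) (pt 32 4)) p

lemma E2_eq_image : E2 = refl '' E1 := by
  ext q
  constructor
  · rintro ⟨h1, h2, h3⟩
    refine ⟨refl q, ?_, refl_invol q⟩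
    have c0 := refl_coord q 0
    have c1 := refl_coord q 1
    simp only [pt_zero, pt_one] at c0 c1
    exact ⟨by rw [c1]; linarith, by rw [c0]; linarith, by rw [c0, c1]; linarith⟩
  · rintro ⟨p, ⟨h1, h2, h3⟩, rfl⟩
    have c0 := refl_coord p 0
    have c1 := refl_coord p 1
    simp only [pt_zero, pt_one] at c0 c1
    exact ⟨by rw [c1]; linarith, by rw [c0]; linarith, by rw [c0, c1]; linarith⟩

/-! ### The final inequality -/

lemma key_real_ineq :
    (50 + Real.sqrt 1700) * 288 < (72 + 2 * Real.sqrt 68 + 2 * Real.sqrt 612) * 200 := by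
  have h17 : (0:ℝ) < Real.sqrt 17 := Real.sqrt_pos.2 (by norm_num)
  have e68 : Real.sqrt 68 = 2 * Real.sqrt 17 := by
    rw [show (68:ℝ) = 2 ^ 2 * 17 by norm_num, Real.sqrt_mul (by positivity),
      Real.sqrt_sq (by norm_num : (0:ℝ) ≤ 2)]
  have e612 : Real.sqrt 612 = 6 * Real.sqrt 17 := by
    rw [show (612:ℝ) = 6 ^ 2 * 17 by norm_num, Real.sqrt_mul (by positivity),
      Real.sqrt_sq (by norm_num : (0:ℝ) ≤ 6)]
  have e1700 : Real.sqrt 1700 = 10 * Real.sqrt 17 := by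
    rw [show (1700:ℝ) = 10 ^ 2 * 17 by norm_num, Real.sqrt_mul (by positivity),
      Real.sqrt_sq (by norm_num : (0:ℝ) ≤ 10)]
  rw [e68, e612, e1700]
  nlinarith

lemma main_ineq :
    μH[1] (frontier E1) * volume (E1 ∪ E2) < μH[1] (frontier (E1 ∪ E2)) * volume E1 := by
  calc μH[1] (frontier E1) * volume (E1 ∪ E2)
      ≤ ENNReal.ofReal (50 + Real.sqrt 1700) * ENNReal.ofReal 288 :=
        mul_le_mul' frontier_E1_upper volume_union_le
    _ = ENNReal.ofReal ((50 + Real.sqrt 1700) * 288) := by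
        rw [ENNReal.ofReal_mul (by positivity)]
    _ < ENNReal.ofReal ((72 + 2 * Real.sqrt 68 + 2 * Real.sqrt 612) * 200) := by
        rw [ENNReal.ofReal_lt_ofReal_iff (by positivity)]
        exact key_real_ineq
    _ = ENNReal.ofReal (72 + 2 * Real.sqrt 68 + 2 * Real.sqrt 612) * ENNReal.ofReal 200 := by
        rw [ENNReal.ofReal_mul (by positivity)]
    _ ≤ μH[1] (frontier (E1 ∪ E2)) * volume E1 :=
        mul_le_mul' frontier_union_lower (le_of_eq volume_E1.symm)

end Gyenes
end

open Gyenes in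
/-- Gyenes's example: there exist congruent compact convex sets `E₁ ≅ E₂` in the
plane, each with nonempty interior, such that the perimeter to area ratio of
`E₁ ∪ E₂` strictly exceeds the perimeter to area ratio of `E₁`. -/
theorem exists_congruent_convex_sets_with_union_ratio_gt :
    ∃ E₁ E₂ : Set (EuclideanSpace ℝ (Fin 2)),
      IsCompact E₁ ∧ Convex ℝ E₁ ∧ (interior E₁).Nonempty ∧
      IsCompact E₂ ∧ Convex ℝ E₂ ∧ (interior E₂).Nonempty ∧
      (∃ f : EuclideanSpace ℝ (Fin 2) ≃ᵢ EuclideanSpace ℝ (Fin 2), E₂ = f '' E₁) ∧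
      μH[1] (frontier E₁) * volume (E₁ ∪ E₂) <
        μH[1] (frontier (E₁ ∪ E₂)) * volume E₁ := by
  exact ⟨E1, E2, E1_compact, E1_convex, E1_interior_nonempty,
    E2_compact, E2_convex, E2_interior_nonempty, ⟨refl, E2_eq_image⟩, main_ineq⟩
end
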